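/- arXiv:2109.06656 — 5 statements merged into one kernel-verified Lean document; each statement's English description precedes it below -/
import Mathlib

section
/- Let u ∈ Δ(K × (C × C₁) × (D × D₁)) and v = marg_{K×C×D} u. Suppose d₁ is ε-conditionally independent from (k,c) given d, and c₁ is ε-conditionally independent from (k,d) given c. Then for every zero-sum payoff function g bounded by 1, |val(u,g) - val(v,g)| ≤ ε. -/
open scoped BigOperators

noncomputable section

/-- A probability distribution on a finite type, given as a nonnegative function summing to 1. -/
def IsDist {α : Type*} [Fintype α] (u : α → ℝ) : Prop :=
  (∀ a, 0 ≤ u a) ∧ ∑ a, u a = 1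

/-- A garbling (stochastic map / behavioral strategy). -/
def IsKernel {α β : Type*} [Fintype β] (q : α → β → ℝ) : Prop :=
  ∀ a, IsDist (q a)

/-- Expected payoff in the zero-sum Bayesian game `Γ(u,g)` when players use
behavioral strategies `σ` and `τ`. -/
def pay {K C D I J : Type*} [Fintype K] [Fintype C] [Fintype D] [Fintype I] [Fintype J]
    (u : K × C × D → ℝ) (g : K → I → J → ℝ) (σ : C → I → ℝ) (τ : D → J → ℝ) : ℝ :=
  ∑ k, ∑ c, ∑ d, ∑ i, ∑ j, u (k, c, d) * σ c i * τ d j * g k i j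

/-- The value (maxmin) of the zero-sum Bayesian game `Γ(u,g)`, player 1 maximizing. -/
def gameVal {K C D I J : Type*} [Fintype K] [Fintype C] [Fintype D] [Fintype I] [Fintype J]
    (u : K × C × D → ℝ) (g : K → I → J → ℝ) : ℝ :=
  sSup {x : ℝ | ∃ σ : C → I → ℝ, IsKernel σ ∧
    x = sInf {y : ℝ | ∃ τ : D → J → ℝ, IsKernel τ ∧ y = pay u g σ τ}}

/-- Garbling of player 1's signal: `(q.u)(k,c,d) = ∑ c', u(k,c',d) q(c|c')`. -/
def garbleL {K C C' D : Type*} [Fintype C] (q : C → C' → ℝ) (u : K × C × D → ℝ) :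
    K × C' × D → ℝ :=
  fun x => ∑ c, u (x.1, c, x.2.2) * q c x.2.1

/-- Garbling of player 2's signal: `(u.q)(k,c,d) = ∑ d', u(k,c,d') q(d|d')`. -/
def garbleR {K C D D' : Type*} [Fintype D] (q : D → D' → ℝ) (u : K × C × D → ℝ) :
    K × C × D' → ℝ :=
  fun x => ∑ d, u (x.1, x.2.1, d) * q d x.2.2

/-- ℓ¹ distance. -/
def l1 {α : Type*} [Fintype α] (u v : α → ℝ) : ℝ := ∑ a, |u a - v a|

/-- Payoff functions bounded by 1. -/
def Bounded1 {K I J : Type*} (g : K → I → J → ℝ) : Prop := ∀ k i j, |g k i j| ≤ 1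

/-- The value-based distance: sup over all finite zero-sum games (with nonempty
finite action sets, payoffs bounded by 1) of the absolute difference of values. -/
def valueDist {K C D C' D' : Type*} [Fintype K] [Fintype C] [Fintype D] [Fintype C'] [Fintype D']
    (u : K × C × D → ℝ) (v : K × C' × D' → ℝ) : ℝ :=
  sSup {x : ℝ | ∃ (m n : ℕ) (g : K → Fin (m + 1) → Fin (n + 1) → ℝ),
    Bounded1 g ∧ x = |gameVal u g - gameVal v g|}

/-- Value of a single-agent decision problem on a single-agent information structure. -/
def val1 {K C I : Type*} [Fintype K] [Fintype C] [Fintype I] [Nonempty I]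
    (u : K × C → ℝ) (g : K → I → ℝ) : ℝ :=
  ∑ c, ⨆ i, ∑ k, u (k, c) * g k i

/-- The single-agent value-based distance. -/
def valueDist1 {K C C' : Type*} [Fintype K] [Fintype C] [Fintype C']
    (u : K × C → ℝ) (v : K × C' → ℝ) : ℝ :=
  sSup {x : ℝ | ∃ (m : ℕ) (g : K → Fin (m + 1) → ℝ),
    (∀ k i, |g k i| ≤ 1) ∧ x = |val1 u g - val1 v g|}

/-- Garbling of the signal in a single-agent structure. -/
def garble1 {K C C' : Type*} [Fintype C] (q : C → C' → ℝ) (u : K × C → ℝ) : K × C' → ℝ :=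
  fun x => ∑ c, u (x.1, c) * q c x.2

end

set_option linter.unusedSectionVars false

noncomputable section
namespace S7

lemma abs_sum_le {α : Type*} (s : Finset α) (f b : α → ℝ) (h : ∀ a ∈ s, |f a| ≤ b a) :
    |∑ a ∈ s, f a| ≤ ∑ a ∈ s, b a :=
  (Finset.abs_sum_le_sum_abs _ _).trans (Finset.sum_le_sum h)

lemma isDist_unif {β : Type*} [Fintype β] [Nonempty β] :
    IsDist (fun (_ : β) => (Fintype.card β : ℝ)⁻¹) := by
  constructor
  · intro i; positivity
  · simp only [Finset.sum_const, Finset.card_univ, nsmul_eq_mul]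
    rw [mul_inv_cancel₀]
    exact_mod_cast Fintype.card_ne_zero

lemma isKernel_unif {α β : Type*} [Fintype β] [Nonempty β] :
    IsKernel (fun (_ : α) (_ : β) => (Fintype.card β : ℝ)⁻¹) :=
  fun _ => isDist_unif

lemma rot3 {α β γ : Type*} [Fintype α] [Fintype β] [Fintype γ] (f : α → β → γ → ℝ) :
    ∑ a, ∑ b, ∑ c, f a b c = ∑ b, ∑ c, ∑ a, f a b c := by
  rw [Finset.sum_comm]
  exact Finset.sum_congr rfl fun b _ => Finset.sum_comm

lemma rot4 {α β γ δ : Type*} [Fintype α] [Fintype β] [Fintype γ] [Fintype δ]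
    (f : α → β → γ → δ → ℝ) :
    ∑ a, ∑ b, ∑ c, ∑ d, f a b c d = ∑ b, ∑ c, ∑ d, ∑ a, f a b c d := by
  rw [Finset.sum_comm]
  exact Finset.sum_congr rfl fun b _ => rot3 _

variable {K C D I J : Type*} [Fintype K] [Fintype C] [Fintype D] [Fintype I] [Fintype J]

lemma pay_abs_le (u : K × C × D → ℝ) (g : K → I → J → ℝ) (σ : C → I → ℝ) (τ : D → J → ℝ)
    (hσ : IsKernel σ) (hτ : IsKernel τ) (hg : Bounded1 g) :
    |pay u g σ τ| ≤ ∑ k, ∑ c, ∑ d, |u (k, c, d)| := by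
  unfold pay
  apply abs_sum_le; intro k _
  apply abs_sum_le; intro c _
  apply abs_sum_le; intro d _
  have key : ∑ i, ∑ j, |u (k,c,d)| * σ c i * τ d j = |u (k, c, d)| := by
    have h1 : ∀ i, ∑ j, |u (k,c,d)| * σ c i * τ d j = |u (k,c,d)| * σ c i := by
      intro i; rw [← Finset.mul_sum, (hτ d).2, mul_one]
    rw [Finset.sum_congr rfl (fun i _ => h1 i), ← Finset.mul_sum, (hσ c).2, mul_one]
  rw [← key]
  apply abs_sum_le; intro i _
  apply abs_sum_le; intro j _
  rw [abs_mul, abs_mul, abs_mul]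
  rw [abs_of_nonneg ((hσ c).1 i), abs_of_nonneg ((hτ d).1 j)]
  calc |u (k,c,d)| * σ c i * τ d j * |g k i j| ≤ |u (k,c,d)| * σ c i * τ d j * 1 := by
        apply mul_le_mul_of_nonneg_left (hg k i j)
        have := (hσ c).1 i; have := (hτ d).1 j; positivity
    _ = |u (k,c,d)| * σ c i * τ d j := mul_one _

lemma pay_sub (u u' : K × C × D → ℝ) (g : K → I → J → ℝ) (σ : C → I → ℝ) (τ : D → J → ℝ) :
    pay u g σ τ - pay u' g σ τ = pay (fun x => u x - u' x) g σ τ := by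
  unfold pay
  simp only [← Finset.sum_sub_distrib, sub_mul]

lemma pay_sub_abs_le (u u' : K × C × D → ℝ) (g : K → I → J → ℝ) (σ : C → I → ℝ) (τ : D → J → ℝ)
    (hσ : IsKernel σ) (hτ : IsKernel τ) (hg : Bounded1 g) :
    |pay u g σ τ - pay u' g σ τ| ≤ ∑ k, ∑ c, ∑ d, |u (k, c, d) - u' (k, c, d)| := by
  rw [pay_sub]
  exact pay_abs_le _ _ _ _ hσ hτ hg

def inS (u : K × C × D → ℝ) (g : K → I → J → ℝ) (σ : C → I → ℝ) : Set ℝ :=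
  {y | ∃ τ : D → J → ℝ, IsKernel τ ∧ y = pay u g σ τ}

lemma gameVal_eq (u : K × C × D → ℝ) (g : K → I → J → ℝ) :
    gameVal u g = sSup {x : ℝ | ∃ σ, IsKernel σ ∧ x = sInf (inS u g σ)} := rfl

variable [Nonempty I] [Nonempty J]

lemma inS_nonempty (u : K × C × D → ℝ) (g : K → I → J → ℝ) (σ : C → I → ℝ) :
    (inS u g σ).Nonempty :=
  ⟨_, _, isKernel_unif, rfl⟩

lemma inS_bddBelow (u : K × C × D → ℝ) (g : K → I → J → ℝ) (σ : C → I → ℝ) (hσ : IsKernel σ)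
    (hB : ∀ σ' τ, IsKernel σ' → IsKernel τ → |pay u g σ' τ| ≤ 1) :
    BddBelow (inS u g σ) := by
  refine ⟨-1, ?_⟩
  rintro y ⟨τ, hτ, rfl⟩
  exact neg_le_of_abs_le (hB σ τ hσ hτ)

lemma sInf_inS_le (u : K × C × D → ℝ) (g : K → I → J → ℝ) (σ : C → I → ℝ) (τ : D → J → ℝ)
    (hσ : IsKernel σ) (hτ : IsKernel τ)
    (hB : ∀ σ' τ', IsKernel σ' → IsKernel τ' → |pay u g σ' τ'| ≤ 1) :
    sInf (inS u g σ) ≤ pay u g σ τ :=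
  csInf_le (inS_bddBelow u g σ hσ hB) ⟨τ, hτ, rfl⟩

lemma gameVal_le_of {C' D' : Type*} [Fintype C'] [Fintype D']
    (u : K × C × D → ℝ) (v : K × C' × D' → ℝ) (g : K → I → J → ℝ) (ε : ℝ)
    (hBu : ∀ σ τ, IsKernel σ → IsKernel τ → |pay u g σ τ| ≤ 1)
    (hBv : ∀ σ τ, IsKernel σ → IsKernel τ → |pay v g σ τ| ≤ 1)
    (h : ∀ σ : C → I → ℝ, IsKernel σ → ∃ σ' : C' → I → ℝ, IsKernel σ' ∧
        ∀ τ' : D' → J → ℝ, IsKernel τ' → ∃ τ : D → J → ℝ, IsKernel τ ∧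
          pay u g σ τ - ε ≤ pay v g σ' τ') :
    gameVal u g ≤ gameVal v g + ε := by
  rw [gameVal_eq, gameVal_eq]
  have houter_v_bdd : BddAbove {x : ℝ | ∃ σ : C' → I → ℝ, IsKernel σ ∧ x = sInf (inS v g σ)} := by
    refine ⟨1, ?_⟩
    rintro x ⟨σ, hσ, rfl⟩
    calc sInf (inS v g σ) ≤ pay v g σ (fun _ _ => (Fintype.card J : ℝ)⁻¹) :=
          sInf_inS_le v g σ _ hσ isKernel_unif hBv
      _ ≤ 1 := le_of_abs_le (hBv _ _ hσ isKernel_unif)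
  apply csSup_le
  · exact ⟨_, fun _ _ => (Fintype.card I : ℝ)⁻¹, isKernel_unif, rfl⟩
  rintro x ⟨σ, hσ, rfl⟩
  obtain ⟨σ', hσ', hstep⟩ := h σ hσ
  have h1 : sInf (inS u g σ) - ε ≤ sInf (inS v g σ') := by
    apply le_csInf (inS_nonempty v g σ')
    rintro y ⟨τ', hτ', rfl⟩
    obtain ⟨τ, hτ, hle⟩ := hstep τ' hτ'
    calc sInf (inS u g σ) - ε ≤ pay u g σ τ - ε := by
          have := sInf_inS_le u g σ τ hσ hτ hBu; linarith
      _ ≤ pay v g σ' τ' := hle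
  have h2 : sInf (inS v g σ') ≤
      sSup {x : ℝ | ∃ σ : C' → I → ℝ, IsKernel σ ∧ x = sInf (inS v g σ)} :=
    le_csSup houter_v_bdd ⟨σ', hσ', rfl⟩
  linarith

lemma dirA {K C C₁ D D₁ I J : Type*} [Fintype K] [Fintype C] [Fintype C₁] [Fintype D]
    [Fintype D₁] [Fintype I] [Nonempty I] [Fintype J] [Nonempty J]
    (u : K × (C × C₁) × (D × D₁) → ℝ) (hu0 : ∀ x, 0 ≤ u x) (ε : ℝ)
    (hCI1 : ∑ c : C, ∑ c₁ : C₁, ∑ k : K, ∑ d : D,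
        |(∑ d₁, u (k, (c, c₁), (d, d₁)))
          - (∑ k', ∑ d', ∑ d₁, u (k', (c, c₁), (d', d₁)))
            * (∑ c₁', ∑ d₁, u (k, (c, c₁'), (d, d₁)))
            / (∑ k', ∑ c₁', ∑ d', ∑ d₁, u (k', (c, c₁'), (d', d₁)))| ≤ ε)
    (v : K × C × D → ℝ) (hv : ∀ k c d, v (k, c, d) = ∑ c₁, ∑ d₁, u (k, (c, c₁), (d, d₁)))
    (g : K → I → J → ℝ) (hg : Bounded1 g)
    (σ : C × C₁ → I → ℝ) (hσ : IsKernel σ) :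
    ∃ σ' : C → I → ℝ, IsKernel σ' ∧ ∀ τ' : D → J → ℝ, IsKernel τ' →
      ∃ τ : D × D₁ → J → ℝ, IsKernel τ ∧ pay u g σ τ - ε ≤ pay v g σ' τ' := by
  classical
  set q : C → C₁ → ℝ := fun c c₁ => ∑ k', ∑ d', ∑ d₁, u (k', (c, c₁), (d', d₁)) with hqdef
  set N : C → ℝ := fun c => ∑ k', ∑ c₁', ∑ d', ∑ d₁, u (k', (c, c₁'), (d', d₁)) with hNdef
  have hq0 : ∀ c c₁, 0 ≤ q c c₁ := fun c c₁ =>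
    Finset.sum_nonneg fun _ _ => Finset.sum_nonneg fun _ _ => Finset.sum_nonneg fun _ _ => hu0 _
  have hNq : ∀ c, N c = ∑ c₁, q c c₁ := fun c => Finset.sum_comm
  have hN0 : ∀ c, 0 ≤ N c := fun c => by
    rw [hNq]; exact Finset.sum_nonneg fun c₁ _ => hq0 c c₁
  have hv0 : ∀ k c d, 0 ≤ v (k, c, d) := fun k c d => by
    rw [hv]
    exact Finset.sum_nonneg fun _ _ => Finset.sum_nonneg fun _ _ => hu0 _
  have hvq : ∀ k c d, v (k, c, d) ≤ ∑ c₁, q c c₁ := by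
    intro k c d
    rw [hv]
    apply Finset.sum_le_sum
    intro c₁ _
    calc ∑ d₁, u (k, (c, c₁), (d, d₁))
        ≤ ∑ d', ∑ d₁, u (k, (c, c₁), (d', d₁)) :=
          Finset.single_le_sum (f := fun d' => ∑ d₁, u (k, (c, c₁), (d', d₁)))
            (fun d' _ => Finset.sum_nonneg fun d₁ _ => hu0 _) (Finset.mem_univ d)
      _ ≤ q c c₁ :=
          Finset.single_le_sum (f := fun k' => ∑ d', ∑ d₁, u (k', (c, c₁), (d', d₁)))
            (fun k' _ => Finset.sum_nonneg fun _ _ => Finset.sum_nonneg fun _ _ => hu0 _)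
            (Finset.mem_univ k)
  have hvzero : ∀ c, N c = 0 → ∀ k d, v (k, c, d) = 0 := by
    intro c hc k d
    have h1 := hvq k c d
    rw [← hNq c, hc] at h1
    exact le_antisymm h1 (hv0 k c d)
  have hqzero : ∀ c, N c = 0 → ∀ c₁, q c c₁ = 0 := by
    intro c hc c₁
    have hs : ∑ c₁, q c c₁ = 0 := by rw [← hNq c]; exact hc
    exact (Finset.sum_eq_zero_iff_of_nonneg (fun c₁ _ => hq0 c c₁)).mp hs c₁ (Finset.mem_univ c₁)
  set σ' : C → I → ℝ :=
    fun c i => if N c = 0 then (Fintype.card I : ℝ)⁻¹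
      else ∑ c₁, q c c₁ / N c * σ (c, c₁) i with hσ'def
  have hσ' : IsKernel σ' := by
    intro c
    by_cases h : N c = 0
    · have : σ' c = fun _ => (Fintype.card I : ℝ)⁻¹ := by
        funext i; simp only [hσ'def, if_pos h]
      rw [this]; exact isDist_unif
    · constructor
      · intro i
        simp only [hσ'def, if_neg h]
        exact Finset.sum_nonneg fun c₁ _ =>
          mul_nonneg (div_nonneg (hq0 c c₁) (hN0 c)) ((hσ (c, c₁)).1 i)
      · simp only [hσ'def, if_neg h]
        rw [Finset.sum_comm]
        have hrow : ∀ c₁, ∑ i, q c c₁ / N c * σ (c, c₁) i = q c c₁ / N c := by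
          intro c₁; rw [← Finset.mul_sum, (hσ (c, c₁)).2, mul_one]
        rw [Finset.sum_congr rfl fun c₁ _ => hrow c₁, ← Finset.sum_div, ← hNq c, div_self h]
  have key : ∀ k c d i,
      ∑ c₁, q c c₁ * v (k, c, d) / N c * σ (c, c₁) i = v (k, c, d) * σ' c i := by
    intro k c d i
    by_cases h : N c = 0
    · rw [hvzero c h k d]
      simp [hqzero c h]
    · simp only [hσ'def, if_neg h]
      rw [Finset.mul_sum]
      exact Finset.sum_congr rfl fun c₁ _ => by ring
  refine ⟨σ', hσ', ?_⟩
  intro τ' hτ'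
  refine ⟨fun p => τ' p.1, fun p => hτ' p.1, ?_⟩
  set w : K × (C × C₁) × D → ℝ := fun x => ∑ d₁, u (x.1, x.2.1, (x.2.2, d₁)) with hwdef
  set wh : K × (C × C₁) × D → ℝ :=
    fun x => q x.2.1.1 x.2.1.2 * v (x.1, x.2.1.1, x.2.2) / N x.2.1.1 with hwhdef
  have e1 : pay u g σ (fun p => τ' p.1) = pay w g σ τ' := by
    unfold pay
    refine Finset.sum_congr rfl fun k _ => Finset.sum_congr rfl fun p _ => ?_
    rw [Fintype.sum_prod_type]
    refine Finset.sum_congr rfl fun d _ => ?_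
    rw [rot3 (fun d₁ i j => u (k, p, (d, d₁)) * σ p i * τ' d j * g k i j)]
    refine Finset.sum_congr rfl fun i _ => Finset.sum_congr rfl fun j _ => ?_
    rw [show w (k, p, d) = ∑ d₁, u (k, p, (d, d₁)) from rfl]
    rw [Finset.sum_mul, Finset.sum_mul, Finset.sum_mul]
  have e2 : pay wh g σ τ' = pay v g σ' τ' := by
    unfold pay
    refine Finset.sum_congr rfl fun k _ => ?_
    rw [Fintype.sum_prod_type]
    refine Finset.sum_congr rfl fun c _ => ?_
    rw [rot4 (fun c₁ d i j => wh (k, (c, c₁), d) * σ (c, c₁) i * τ' d j * g k i j)]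
    refine Finset.sum_congr rfl fun d _ => Finset.sum_congr rfl fun i _ =>
      Finset.sum_congr rfl fun j _ => ?_
    rw [← Finset.sum_mul, ← Finset.sum_mul]
    have : ∑ c₁, wh (k, (c, c₁), d) * σ (c, c₁) i = v (k, c, d) * σ' c i := by
      rw [← key k c d i]
    rw [this]
  have e3 := pay_sub_abs_le w wh g σ τ' hσ hτ' hg
  have hl1 : ∑ k, ∑ p : C × C₁, ∑ d, |w (k, p, d) - wh (k, p, d)| ≤ ε := by
    refine le_trans (le_of_eq ?_) hCI1
    rw [Finset.sum_congr rfl fun k (_ : k ∈ Finset.univ) =>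
      Fintype.sum_prod_type (fun p : C × C₁ => ∑ d, |w (k, p, d) - wh (k, p, d)|)]
    rw [rot3 (fun k c c₁ => ∑ d, |w (k, (c, c₁), d) - wh (k, (c, c₁), d)|)]
    refine Finset.sum_congr rfl fun c _ => Finset.sum_congr rfl fun c₁ _ =>
      Finset.sum_congr rfl fun k _ => Finset.sum_congr rfl fun d _ => ?_
    rw [← hv k c d]
  have hd : pay w g σ τ' - pay wh g σ τ' ≤ ε :=
    le_trans (le_trans (le_abs_self _) e3) hl1
  rw [e1, ← e2]
  linarith
lemma dirB {K C C₁ D D₁ I J : Type*} [Fintype K] [Fintype C] [Fintype C₁] [Fintype D]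
    [Fintype D₁] [Fintype I] [Nonempty I] [Fintype J] [Nonempty J]
    (u : K × (C × C₁) × (D × D₁) → ℝ) (hu0 : ∀ x, 0 ≤ u x) (ε : ℝ)
    (hCI2 : ∑ d : D, ∑ d₁ : D₁, ∑ k : K, ∑ c : C,
        |(∑ c₁, u (k, (c, c₁), (d, d₁)))
          - (∑ k', ∑ c', ∑ c₁, u (k', (c', c₁), (d, d₁)))
            * (∑ c₁, ∑ d₁', u (k, (c, c₁), (d, d₁')))
            / (∑ k', ∑ c', ∑ c₁, ∑ d₁', u (k', (c', c₁), (d, d₁')))| ≤ ε)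
    (v : K × C × D → ℝ) (hv : ∀ k c d, v (k, c, d) = ∑ c₁, ∑ d₁, u (k, (c, c₁), (d, d₁)))
    (g : K → I → J → ℝ) (hg : Bounded1 g)
    (σ' : C → I → ℝ) (hσ' : IsKernel σ') :
    ∃ σ : C × C₁ → I → ℝ, IsKernel σ ∧ ∀ τ : D × D₁ → J → ℝ, IsKernel τ →
      ∃ τ' : D → J → ℝ, IsKernel τ' ∧ pay v g σ' τ' - ε ≤ pay u g σ τ := by
  classical
  set p₂ : D → D₁ → ℝ := fun d d₁ => ∑ k', ∑ c', ∑ c₁, u (k', (c', c₁), (d, d₁)) with hpdef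
  set M : D → ℝ := fun d => ∑ k', ∑ c', ∑ c₁, ∑ d₁', u (k', (c', c₁), (d, d₁')) with hMdef
  have hp0 : ∀ d d₁, 0 ≤ p₂ d d₁ := fun d d₁ =>
    Finset.sum_nonneg fun _ _ => Finset.sum_nonneg fun _ _ => Finset.sum_nonneg fun _ _ => hu0 _
  have hMp : ∀ d, M d = ∑ d₁, p₂ d d₁ := fun d =>
    (rot4 (fun d₁ k c c₁ => u (k, (c, c₁), (d, d₁)))).symm
  have hM0 : ∀ d, 0 ≤ M d := fun d => by
    rw [hMp]; exact Finset.sum_nonneg fun d₁ _ => hp0 d d₁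
  have hv0 : ∀ k c d, 0 ≤ v (k, c, d) := fun k c d => by
    rw [hv]
    exact Finset.sum_nonneg fun _ _ => Finset.sum_nonneg fun _ _ => hu0 _
  have hvp : ∀ k c d, v (k, c, d) ≤ ∑ d₁, p₂ d d₁ := by
    intro k c d
    rw [hv, Finset.sum_comm]
    apply Finset.sum_le_sum
    intro d₁ _
    calc ∑ c₁, u (k, (c, c₁), (d, d₁))
        ≤ ∑ c', ∑ c₁, u (k, (c', c₁), (d, d₁)) :=
          Finset.single_le_sum (f := fun c' => ∑ c₁, u (k, (c', c₁), (d, d₁)))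
            (fun c' _ => Finset.sum_nonneg fun c₁ _ => hu0 _) (Finset.mem_univ c)
      _ ≤ p₂ d d₁ :=
          Finset.single_le_sum (f := fun k' => ∑ c', ∑ c₁, u (k', (c', c₁), (d, d₁)))
            (fun k' _ => Finset.sum_nonneg fun _ _ => Finset.sum_nonneg fun _ _ => hu0 _)
            (Finset.mem_univ k)
  have hvzero : ∀ d, M d = 0 → ∀ k c, v (k, c, d) = 0 := by
    intro d hd k c
    have h1 := hvp k c d
    rw [← hMp d, hd] at h1
    exact le_antisymm h1 (hv0 k c d)
  have hpzero : ∀ d, M d = 0 → ∀ d₁, p₂ d d₁ = 0 := by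
    intro d hd d₁
    have hs : ∑ d₁, p₂ d d₁ = 0 := by rw [← hMp d]; exact hd
    exact (Finset.sum_eq_zero_iff_of_nonneg (fun d₁ _ => hp0 d d₁)).mp hs d₁ (Finset.mem_univ d₁)
  refine ⟨fun p i => σ' p.1 i, fun p => hσ' p.1, ?_⟩
  intro τ hτ
  set τ' : D → J → ℝ :=
    fun d j => if M d = 0 then (Fintype.card J : ℝ)⁻¹
      else ∑ d₁, p₂ d d₁ / M d * τ (d, d₁) j with hτ'def
  have hτ' : IsKernel τ' := by
    intro d
    by_cases h : M d = 0
    · have : τ' d = fun _ => (Fintype.card J : ℝ)⁻¹ := by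
        funext j; simp only [hτ'def, if_pos h]
      rw [this]; exact isDist_unif
    · constructor
      · intro j
        simp only [hτ'def, if_neg h]
        exact Finset.sum_nonneg fun d₁ _ =>
          mul_nonneg (div_nonneg (hp0 d d₁) (hM0 d)) ((hτ (d, d₁)).1 j)
      · simp only [hτ'def, if_neg h]
        rw [Finset.sum_comm]
        have hrow : ∀ d₁, ∑ j, p₂ d d₁ / M d * τ (d, d₁) j = p₂ d d₁ / M d := by
          intro d₁; rw [← Finset.mul_sum, (hτ (d, d₁)).2, mul_one]
        rw [Finset.sum_congr rfl fun d₁ _ => hrow d₁, ← Finset.sum_div, ← hMp d, div_self h]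
  have key : ∀ k c d j,
      ∑ d₁, p₂ d d₁ * v (k, c, d) / M d * τ (d, d₁) j = v (k, c, d) * τ' d j := by
    intro k c d j
    by_cases h : M d = 0
    · rw [hvzero d h k c]
      simp [hpzero d h]
    · simp only [hτ'def, if_neg h]
      rw [Finset.mul_sum]
      exact Finset.sum_congr rfl fun d₁ _ => by ring
  refine ⟨τ', hτ', ?_⟩
  set w : K × C × (D × D₁) → ℝ := fun x => ∑ c₁, u (x.1, (x.2.1, c₁), x.2.2) with hwdef
  set wh : K × C × (D × D₁) → ℝ :=
    fun x => p₂ x.2.2.1 x.2.2.2 * v (x.1, x.2.1, x.2.2.1) / M x.2.2.1 with hwhdef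
  have e1 : pay u g (fun p : C × C₁ => σ' p.1) τ = pay w g σ' τ := by
    unfold pay
    refine Finset.sum_congr rfl fun k _ => ?_
    rw [Fintype.sum_prod_type]
    refine Finset.sum_congr rfl fun c _ => ?_
    rw [rot4 (fun c₁ dd i j => u (k, (c, c₁), dd) * σ' (c, c₁).1 i * τ dd j * g k i j)]
    refine Finset.sum_congr rfl fun dd _ => Finset.sum_congr rfl fun i _ =>
      Finset.sum_congr rfl fun j _ => ?_
    rw [show w (k, c, dd) = ∑ c₁, u (k, (c, c₁), dd) from rfl]
    rw [Finset.sum_mul, Finset.sum_mul, Finset.sum_mul]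
  have e2 : pay wh g σ' τ = pay v g σ' τ' := by
    unfold pay
    refine Finset.sum_congr rfl fun k _ => Finset.sum_congr rfl fun c _ => ?_
    rw [Fintype.sum_prod_type]
    refine Finset.sum_congr rfl fun d _ => ?_
    rw [rot3 (fun d₁ i j => wh (k, c, (d, d₁)) * σ' c i * τ (d, d₁) j * g k i j)]
    refine Finset.sum_congr rfl fun i _ => Finset.sum_congr rfl fun j _ => ?_
    have hbody : ∀ d₁, wh (k, c, (d, d₁)) * σ' c i * τ (d, d₁) j * g k i j
        = (p₂ d d₁ * v (k, c, d) / M d * τ (d, d₁) j) * (σ' c i * g k i j) := by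
      intro d₁
      show p₂ d d₁ * v (k, c, d) / M d * σ' c i * τ (d, d₁) j * g k i j = _
      ring
    rw [Finset.sum_congr rfl fun d₁ _ => hbody d₁, ← Finset.sum_mul, key k c d j]
    ring
  have e3 := pay_sub_abs_le w wh g σ' τ hσ' hτ hg
  have hl1 : ∑ k, ∑ c, ∑ dd : D × D₁, |w (k, c, dd) - wh (k, c, dd)| ≤ ε := by
    refine le_trans (le_of_eq ?_) hCI2
    rw [Finset.sum_congr rfl fun k (_ : k ∈ Finset.univ) =>
      Finset.sum_congr rfl fun c (_ : c ∈ Finset.univ) =>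
        Fintype.sum_prod_type (fun dd : D × D₁ => |w (k, c, dd) - wh (k, c, dd)|)]
    rw [rot4 (fun k c d d₁ => |w (k, c, (d, d₁)) - wh (k, c, (d, d₁))|)]
    rw [rot4 (fun c d d₁ k => |w (k, c, (d, d₁)) - wh (k, c, (d, d₁))|)]
    refine Finset.sum_congr rfl fun d _ => Finset.sum_congr rfl fun d₁ _ =>
      Finset.sum_congr rfl fun k _ => Finset.sum_congr rfl fun c _ => ?_
    rw [← hv k c d]
  have hd : pay wh g σ' τ - pay w g σ' τ ≤ ε :=
    le_trans (le_trans (le_abs_self _) (by rw [abs_sub_comm]; exact e3)) hl1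
  have hgoal : pay wh g σ' τ - ε ≤ pay u g (fun p => σ' p.1) τ := by
    rw [e1]; linarith
  rw [← e2]
  exact hgoal

end S7
end

theorem stmt7 {K C C₁ D D₁ I J : Type*} [Fintype K] [Fintype C] [Fintype C₁]
    [Fintype D] [Fintype D₁] [Fintype I] [Nonempty I] [Fintype J] [Nonempty J]
    (u : K × (C × C₁) × (D × D₁) → ℝ) (hu : IsDist u) (ε : ℝ)
    -- `d₁` is ε-conditionally independent from `(k,c)` given `d`:
    (hCI2 : ∑ d : D, ∑ d₁ : D₁, ∑ k : K, ∑ c : C,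
        |(∑ c₁, u (k, (c, c₁), (d, d₁)))
          - (∑ k', ∑ c', ∑ c₁, u (k', (c', c₁), (d, d₁)))
            * (∑ c₁, ∑ d₁', u (k, (c, c₁), (d, d₁')))
            / (∑ k', ∑ c', ∑ c₁, ∑ d₁', u (k', (c', c₁), (d, d₁')))| ≤ ε)
    -- `c₁` is ε-conditionally independent from `(k,d)` given `c`:
    (hCI1 : ∑ c : C, ∑ c₁ : C₁, ∑ k : K, ∑ d : D,
        |(∑ d₁, u (k, (c, c₁), (d, d₁)))
          - (∑ k', ∑ d', ∑ d₁, u (k', (c, c₁), (d', d₁)))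
            * (∑ c₁', ∑ d₁, u (k, (c, c₁'), (d, d₁)))
            / (∑ k', ∑ c₁', ∑ d', ∑ d₁, u (k', (c, c₁'), (d', d₁)))| ≤ ε)
    (v : K × C × D → ℝ)
    (hv : ∀ k c d, v (k, c, d) = ∑ c₁, ∑ d₁, u (k, (c, c₁), (d, d₁)))
    (g : K → I → J → ℝ) (hg : Bounded1 g) :
    |gameVal u g - gameVal v g| ≤ ε := by
  have hu0 := hu.1
  have hSu : ∑ k, ∑ p : C × C₁, ∑ qq : D × D₁, |u (k, p, qq)| = 1 := by
    have h1 : ∀ (k : K) (p : C × C₁) (qq : D × D₁), |u (k, p, qq)| = u (k, p, qq) :=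
      fun k p qq => abs_of_nonneg (hu0 _)
    simp_rw [h1]
    rw [← hu.2, Fintype.sum_prod_type u]
    exact Finset.sum_congr rfl fun k _ =>
      (Fintype.sum_prod_type (fun y : (C × C₁) × (D × D₁) => u (k, y))).symm
  have hv0 : ∀ k c d, 0 ≤ v (k, c, d) := fun k c d => by
    rw [hv]
    exact Finset.sum_nonneg fun _ _ => Finset.sum_nonneg fun _ _ => hu0 _
  have hSv : ∑ k, ∑ c, ∑ d, |v (k, c, d)| = 1 := by
    have h1 : ∀ (k : K) (c : C) (d : D), |v (k, c, d)| = v (k, c, d) :=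
      fun k c d => abs_of_nonneg (hv0 k c d)
    have hr : ∀ k : K, ∑ y : (C × C₁) × (D × D₁), u (k, y)
        = ∑ c, ∑ d, ∑ c₁, ∑ d₁, u (k, (c, c₁), (d, d₁)) := by
      intro k
      rw [Fintype.sum_prod_type (fun y : (C × C₁) × (D × D₁) => u (k, y))]
      rw [Fintype.sum_prod_type (fun p : C × C₁ => ∑ qq : D × D₁, u (k, p, qq))]
      refine Finset.sum_congr rfl fun c _ => ?_
      rw [Finset.sum_congr rfl fun c₁ (_ : c₁ ∈ Finset.univ) =>
        Fintype.sum_prod_type (fun qq : D × D₁ => u (k, (c, c₁), qq))]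
      exact Finset.sum_comm
    simp_rw [h1, hv]
    rw [← hu.2, Fintype.sum_prod_type u]
    exact Finset.sum_congr rfl fun k _ => (hr k).symm
  have hBu : ∀ (σ : C × C₁ → I → ℝ) (τ : D × D₁ → J → ℝ),
      IsKernel σ → IsKernel τ → |pay u g σ τ| ≤ 1 := fun σ τ hσ hτ =>
    (S7.pay_abs_le u g σ τ hσ hτ hg).trans (le_of_eq hSu)
  have hBv : ∀ (σ : C → I → ℝ) (τ : D → J → ℝ),
      IsKernel σ → IsKernel τ → |pay v g σ τ| ≤ 1 := fun σ τ hσ hτ =>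
    (S7.pay_abs_le v g σ τ hσ hτ hg).trans (le_of_eq hSv)
  rw [abs_sub_le_iff]
  constructor
  · have := S7.gameVal_le_of u v g ε hBu hBv
      (fun σ hσ => S7.dirA u hu0 ε hCI1 v hv g hg σ hσ)
    linarith
  · have := S7.gameVal_le_of v u g ε hBv hBu
      (fun σ' hσ' => S7.dirB u hu0 ε hCI2 v hv g hg σ' hσ')
    linarith
end

section
/- Suppose an information structure u on K × C × D exhibits ε-knowledge of the state via a map κ : C ∪ D → K (the probability that a player assigns at least 1-ε to state κ(signal) is at least 1-ε for each player), and let v be the common-knowledge structure with the same marginal on K (both players told the state). Then the value-based distance satisfies d(u,v) ≤ 20ε. -/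
open scoped BigOperators

noncomputable section
open Finset

private lemma sum4' {C D I J : Type*} [Fintype C] [Fintype D] [Fintype I] [Fintype J]
    (F : C → D → I → J → ℝ) :
    ∑ c, ∑ d, ∑ i, ∑ j, F c d i j = ∑ i, ∑ j, ∑ c, ∑ d, F c d i j := by
  calc ∑ c, ∑ d, ∑ i, ∑ j, F c d i j
      = ∑ c, ∑ i, ∑ d, ∑ j, F c d i j :=
        Finset.sum_congr rfl fun c _ => Finset.sum_comm
    _ = ∑ i, ∑ c, ∑ d, ∑ j, F c d i j := Finset.sum_comm
    _ = ∑ i, ∑ c, ∑ j, ∑ d, F c d i j :=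
        Finset.sum_congr rfl fun i _ => Finset.sum_congr rfl fun c _ => Finset.sum_comm
    _ = ∑ i, ∑ j, ∑ c, ∑ d, F c d i j :=
        Finset.sum_congr rfl fun i _ => Finset.sum_comm

private lemma unif_kernel {A I : Type*} [Fintype I] [Nonempty I] :
    IsKernel (fun (_ : A) (_ : I) => (1 : ℝ) / Fintype.card I) := by
  intro a
  constructor
  · intro i; positivity
  · have h : (Fintype.card I : ℝ) ≠ 0 := by
      simp [Fintype.card_ne_zero]
    rw [Finset.sum_const, Finset.card_univ, nsmul_eq_mul]
    field_simp

private lemma pay_abs_le {K C D I J : Type*} [Fintype K] [Fintype C] [Fintype D]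
    [Fintype I] [Fintype J]
    {u : K × C × D → ℝ} (hu : IsDist u) {g : K → I → J → ℝ} (hg : Bounded1 g)
    {σ : C → I → ℝ} (hσ : IsKernel σ) {τ : D → J → ℝ} (hτ : IsKernel τ) :
    |pay u g σ τ| ≤ 1 := by
  have key : ∀ k c d, ∑ i, ∑ j, |u (k, c, d) * σ c i * τ d j * g k i j| ≤ u (k, c, d) := by
    intro k c d
    have h1 : ∀ i j, |u (k, c, d) * σ c i * τ d j * g k i j|
        ≤ u (k, c, d) * σ c i * τ d j := by
      intro i j
      have hnn : 0 ≤ u (k, c, d) * σ c i * τ d j :=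
        mul_nonneg (mul_nonneg (hu.1 _) ((hσ c).1 i)) ((hτ d).1 j)
      calc |u (k, c, d) * σ c i * τ d j * g k i j|
          = (u (k, c, d) * σ c i * τ d j) * |g k i j| := by
            rw [abs_mul, abs_of_nonneg hnn]
        _ ≤ (u (k, c, d) * σ c i * τ d j) * 1 := by
            exact mul_le_mul_of_nonneg_left (hg k i j) hnn
        _ = u (k, c, d) * σ c i * τ d j := mul_one _
    calc ∑ i, ∑ j, |u (k, c, d) * σ c i * τ d j * g k i j|
        ≤ ∑ i, ∑ j, u (k, c, d) * σ c i * τ d j :=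
          Finset.sum_le_sum fun i _ => Finset.sum_le_sum fun j _ => h1 i j
      _ = ∑ i, (u (k, c, d) * σ c i) * ∑ j, τ d j := by
          simp [Finset.mul_sum]
      _ = u (k, c, d) := by
          simp [(hτ _).2, ← Finset.mul_sum, (hσ _).2]
  have huk : ∀ k c d, 0 ≤ u (k, c, d) := fun k c d => hu.1 _
  calc |pay u g σ τ|
      ≤ ∑ k, ∑ c, ∑ d, ∑ i, ∑ j, |u (k, c, d) * σ c i * τ d j * g k i j| := by
        refine (Finset.abs_sum_le_sum_abs _ _).trans (Finset.sum_le_sum fun k _ => ?_)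
        refine (Finset.abs_sum_le_sum_abs _ _).trans (Finset.sum_le_sum fun c _ => ?_)
        refine (Finset.abs_sum_le_sum_abs _ _).trans (Finset.sum_le_sum fun d _ => ?_)
        refine (Finset.abs_sum_le_sum_abs _ _).trans (Finset.sum_le_sum fun i _ => ?_)
        exact Finset.abs_sum_le_sum_abs _ _
    _ ≤ ∑ k, ∑ c, ∑ d, u (k, c, d) := by
        exact Finset.sum_le_sum fun k _ => Finset.sum_le_sum fun c _ =>
          Finset.sum_le_sum fun d _ => key k c d
    _ = 1 := by
        have := hu.2
        simpa [Fintype.sum_prod_type] using this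

end
noncomputable section
open Finset
open scoped Classical

private lemma badmass {K X : Type*} [Fintype K] [Fintype X] [DecidableEq K]
    (w : K → X → ℝ) (hw : ∀ k x, 0 ≤ w k x) (hsum : ∑ k, ∑ x, w k x = 1)
    (κ : X → K) (ε : ℝ) (hε : 0 ≤ ε)
    (h : 1 - ε ≤ ∑ x, if (1 - ε) * (∑ k, w k x) ≤ w (κ x) x then (∑ k, w k x) else 0) :
    ∑ k, ∑ x, (if κ x = k then 0 else w k x) ≤ 2 * ε := by
  set m : X → ℝ := fun x => ∑ k, w k x with hm
  set n : X → ℝ := fun x => w (κ x) x with hn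
  have hm0 : ∀ x, 0 ≤ m x := fun x => Finset.sum_nonneg fun k _ => hw k x
  have hn0 : ∀ x, 0 ≤ n x := fun x => hw _ x
  have hmsum : ∑ x, m x = 1 := by rw [← hsum]; exact Finset.sum_comm
  have hB : ∑ k, ∑ x, (if κ x = k then 0 else w k x) = ∑ x, (m x - n x) := by
    rw [Finset.sum_comm]
    refine Finset.sum_congr rfl fun x _ => ?_
    have e1 : ∀ k, (if κ x = k then 0 else w k x)
        = w k x - (if κ x = k then w k x else 0) := by
      intro k; split_ifs <;> simp
    rw [Finset.sum_congr rfl fun k _ => e1 k, Finset.sum_sub_distrib,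
      Finset.sum_ite_eq univ (κ x) (fun k => w k x)]
    simp [hm, hn]
  set G : ℝ := ∑ x, if (1 - ε) * m x ≤ n x then m x else 0 with hG
  have hG1 : G ≤ 1 := by
    rw [← hmsum]
    refine Finset.sum_le_sum fun x _ => ?_
    split_ifs
    . exact le_rfl
    . exact hm0 x
  have key : ∀ x, m x - n x
      ≤ ε * (if (1 - ε) * m x ≤ n x then m x else 0)
        + (m x - (if (1 - ε) * m x ≤ n x then m x else 0)) := by
    intro x
    split_ifs with hx
    · nlinarith [hm0 x]
    · nlinarith [hn0 x, hm0 x]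
  have hBle : ∑ x, (m x - n x) ≤ ε * G + (1 - G) := by
    calc ∑ x, (m x - n x)
        ≤ ∑ x, (ε * (if (1 - ε) * m x ≤ n x then m x else 0)
          + (m x - (if (1 - ε) * m x ≤ n x then m x else 0))) :=
          Finset.sum_le_sum fun x _ => key x
      _ = ε * G + (1 - G) := by
          rw [Finset.sum_add_distrib, Finset.sum_sub_distrib, ← Finset.mul_sum, hmsum]
  have hGge : 1 - ε ≤ G := h
  rw [hB]
  nlinarith [mul_le_mul_of_nonneg_left hG1 hε]

end
noncomputable section
open Finset
open scoped Classical

private lemma pay_v_eq {K C D I J : Type*} [Fintype K] [Fintype C] [Fintype D]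
    [Fintype I] [Fintype J] [DecidableEq K]
    (u : K × C × D → ℝ) (v : K × K × K → ℝ)
    (hv : ∀ k k₁ k₂, v (k, k₁, k₂)
      = if k₁ = k ∧ k₂ = k then (∑ c, ∑ d, u (k, c, d)) else 0)
    (g : K → I → J → ℝ) (σ : K → I → ℝ) (τ : K → J → ℝ) :
    pay v g σ τ = ∑ k, (∑ c, ∑ d, u (k, c, d)) * (∑ i, ∑ j, σ k i * τ k j * g k i j) := by
  unfold pay
  refine Finset.sum_congr rfl fun k _ => ?_
  have step1 : ∀ k₁ : K, (∑ k₂ : K, ∑ i, ∑ j, v (k, k₁, k₂) * σ k₁ i * τ k₂ j * g k i j)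
      = if k₁ = k then (∑ i, ∑ j, (∑ c, ∑ d, u (k, c, d)) * σ k i * τ k j * g k i j)
        else 0 := by
    intro k₁
    by_cases h1 : k₁ = k
    · subst h1
      rw [if_pos rfl]
      rw [Finset.sum_eq_single k₁]
      · simp [hv]
      · intro k₂ _ hk₂
        refine Finset.sum_eq_zero fun i _ => Finset.sum_eq_zero fun j _ => ?_
        simp [hv, hk₂]
      · simp
    · rw [if_neg h1]
      refine Finset.sum_eq_zero fun k₂ _ => Finset.sum_eq_zero fun i _ =>
        Finset.sum_eq_zero fun j _ => ?_
      simp [hv, h1]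
  rw [Finset.sum_congr rfl fun k₁ _ => step1 k₁, Finset.sum_ite_eq' univ k]
  simp [Finset.mul_sum, mul_assoc]

private lemma u_zero_of_P_zero {K C D : Type*} [Fintype C] [Fintype D]
    {u : K × C × D → ℝ} (hu : ∀ x, 0 ≤ u x) {k : K}
    (hP : ¬ 0 < ∑ c, ∑ d, u (k, c, d)) (c : C) (d : D) : u (k, c, d) = 0 := by
  have h0 : ∑ c, ∑ d, u (k, c, d) = 0 := by
    have hnn : 0 ≤ ∑ c, ∑ d, u (k, c, d) :=
      Finset.sum_nonneg fun c _ => Finset.sum_nonneg fun d _ => hu _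
    rcases eq_or_lt_of_le hnn with h | h
    · exact h.symm
    · exact absurd h hP
  have h1 : ∀ c ∈ (univ : Finset C), ∑ d, u (k, c, d) = 0 := by
    rw [← Finset.sum_eq_zero_iff_of_nonneg fun c _ => Finset.sum_nonneg fun d _ => hu _]
    exact h0
  have h2 := (Finset.sum_eq_zero_iff_of_nonneg fun d _ => hu (k, c, d)).mp
    (h1 c (mem_univ c))
  exact h2 d (mem_univ d)

end
noncomputable section
open Finset
open scoped Classical

private lemma abs_sub_le' (a b : ℝ) : |a - b| ≤ |a| + |b| := by
  rw [sub_eq_add_neg]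
  exact (abs_add_le _ _).trans (by rw [abs_neg])

private lemma sum_abs_sub_le {K I : Type*} [Fintype I]
    {σ : K → I → ℝ} (hσ : IsKernel σ) (a b : K) :
    ∑ i, |σ a i - σ b i| ≤ 2 := by
  calc ∑ i, |σ a i - σ b i| ≤ ∑ i, (|σ a i| + |σ b i|) :=
        Finset.sum_le_sum fun i _ => abs_sub_le' _ _
    _ = (∑ i, σ a i) + (∑ i, σ b i) := by
        rw [Finset.sum_add_distrib]
        congr 1 <;> exact Finset.sum_congr rfl fun i _ => abs_of_nonneg (by
          first
          | exact (hσ a).1 i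
          | exact (hσ b).1 i)
    _ = 2 := by rw [(hσ a).2, (hσ b).2]; norm_num

private lemma coreL {K C D I J : Type*} [Fintype K] [Fintype C] [Fintype D]
    [Fintype I] [Fintype J] [DecidableEq K] [Nonempty J]
    (u : K × C × D → ℝ) (hu : IsDist u) (v : K × K × K → ℝ)
    (hv : ∀ k k₁ k₂, v (k, k₁, k₂)
      = if k₁ = k ∧ k₂ = k then (∑ c, ∑ d, u (k, c, d)) else 0)
    (g : K → I → J → ℝ) (hg : Bounded1 g) (κC : C → K)
    (σ : K → I → ℝ) (hσ : IsKernel σ) (τ : D → J → ℝ) (hτ : IsKernel τ) :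
    ∃ τ' : K → J → ℝ, IsKernel τ' ∧
      |pay u g (fun c => σ (κC c)) τ - pay v g σ τ'| ≤
        2 * ∑ k, ∑ c, ∑ d, (if κC c = k then 0 else u (k, c, d)) := by
  set P : K → ℝ := fun k => ∑ c, ∑ d, u (k, c, d) with hP
  set S : K → J → ℝ := fun k j => ∑ c, ∑ d, u (k, c, d) * τ d j with hS
  have hSnn : ∀ k j, 0 ≤ S k j := fun k j =>
    Finset.sum_nonneg fun c _ => Finset.sum_nonneg fun d _ =>
      mul_nonneg (hu.1 _) ((hτ d).1 j)
  have hPnn : ∀ k, 0 ≤ P k := fun k =>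
    Finset.sum_nonneg fun c _ => Finset.sum_nonneg fun d _ => hu.1 _
  have hSsum : ∀ k, ∑ j, S k j = P k := by
    intro k
    rw [hS, hP]
    simp only
    rw [Finset.sum_comm]
    refine Finset.sum_congr rfl fun c _ => ?_
    rw [Finset.sum_comm]
    refine Finset.sum_congr rfl fun d _ => ?_
    rw [← Finset.mul_sum, (hτ d).2, mul_one]
  set τ' : K → J → ℝ := fun k j =>
    if 0 < P k then S k j / P k else 1 / Fintype.card J with hτ'
  have hker : IsKernel τ' := by
    intro k
    constructor
    · intro j
      rw [hτ']
      simp only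
      split_ifs with h
      · exact div_nonneg (hSnn k j) (hPnn k)
      · positivity
    · rw [hτ']
      simp only
      split_ifs with h
      · rw [← Finset.sum_div, hSsum k, div_self (ne_of_gt h)]
      · have hcard : (Fintype.card J : ℝ) ≠ 0 := by simp [Fintype.card_ne_zero]
        rw [Finset.sum_const, Finset.card_univ, nsmul_eq_mul]
        field_simp
  refine ⟨τ', hker, ?_⟩
  -- the intermediate quantity
  set A : ℝ := ∑ k, ∑ i, ∑ j, σ k i * S k j * g k i j with hA
  have claim1 : pay v g σ τ' = A := by
    rw [pay_v_eq u v hv g σ τ', hA]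
    refine Finset.sum_congr rfl fun k _ => ?_
    by_cases hPk : 0 < P k
    · rw [Finset.mul_sum]
      refine Finset.sum_congr rfl fun i _ => ?_
      rw [Finset.mul_sum]
      refine Finset.sum_congr rfl fun j _ => ?_
      rw [hτ']
      simp only [if_pos hPk]
      field_simp
      try ring
    · have hu0 : ∀ c d, u (k, c, d) = 0 := u_zero_of_P_zero hu.1 hPk
      have hP0 : P k = 0 := by
        rw [hP]; exact Finset.sum_eq_zero fun c _ => Finset.sum_eq_zero fun d _ => hu0 c d
      have hS0 : ∀ j, S k j = 0 := fun j => by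
        rw [hS]
        exact Finset.sum_eq_zero fun c _ => Finset.sum_eq_zero fun d _ => by
          rw [hu0 c d, zero_mul]
      have hL : (∑ c, ∑ d, u (k, c, d)) = (0:ℝ) := hP0
      rw [hL, zero_mul]
      exact (Finset.sum_eq_zero fun i _ => Finset.sum_eq_zero fun j _ => by
        rw [hS0 j]; ring).symm
  have claim1' : A = ∑ k, ∑ c, ∑ d, ∑ i, ∑ j, u (k, c, d) * σ k i * τ d j * g k i j := by
    rw [hA]
    refine Finset.sum_congr rfl fun k _ => ?_
    rw [sum4']
    refine Finset.sum_congr rfl fun i _ => Finset.sum_congr rfl fun j _ => ?_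
    calc σ k i * S k j * g k i j
        = (∑ c, ∑ d, u (k, c, d) * τ d j) * (σ k i * g k i j) := by rw [hS]; ring
      _ = ∑ c, ∑ d, (u (k, c, d) * τ d j) * (σ k i * g k i j) := by
          simp only [Finset.sum_mul]
      _ = ∑ c, ∑ d, u (k, c, d) * σ k i * τ d j * g k i j :=
          Finset.sum_congr rfl fun c _ => Finset.sum_congr rfl fun d _ => by ring
  rw [claim1, claim1']
  have hdiff : pay u g (fun c => σ (κC c)) τ
        - ∑ k, ∑ c, ∑ d, ∑ i, ∑ j, u (k, c, d) * σ k i * τ d j * g k i j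
      = ∑ k, ∑ c, ∑ d, ∑ i, ∑ j,
          (u (k, c, d) * σ (κC c) i * τ d j * g k i j
            - u (k, c, d) * σ k i * τ d j * g k i j) := by
    simp only [pay, ← Finset.sum_sub_distrib]
  rw [hdiff]
  have key : ∀ k c d, ∑ i, ∑ j,
      |u (k, c, d) * σ (κC c) i * τ d j * g k i j
        - u (k, c, d) * σ k i * τ d j * g k i j|
      ≤ 2 * (if κC c = k then 0 else u (k, c, d)) := by
    intro k c d
    by_cases hkc : κC c = k
    · simp [hkc]
    · rw [if_neg hkc]
      have step : ∀ i j, |u (k, c, d) * σ (κC c) i * τ d j * g k i j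
          - u (k, c, d) * σ k i * τ d j * g k i j|
          ≤ (u (k, c, d) * τ d j) * |σ (κC c) i - σ k i| := by
        intro i j
        have e : u (k, c, d) * σ (κC c) i * τ d j * g k i j
            - u (k, c, d) * σ k i * τ d j * g k i j
            = ((u (k, c, d) * τ d j) * (σ (κC c) i - σ k i)) * g k i j := by ring
        rw [e, abs_mul]
        have h2 : |u (k, c, d) * τ d j * (σ (κC c) i - σ k i)|
            = u (k, c, d) * τ d j * |σ (κC c) i - σ k i| := by
          rw [abs_mul, abs_of_nonneg (mul_nonneg (hu.1 _) ((hτ d).1 j))]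
        rw [h2]
        have h3 := mul_le_mul_of_nonneg_left (hg k i j)
          (mul_nonneg (mul_nonneg (hu.1 (k, c, d)) ((hτ d).1 j))
            (abs_nonneg (σ (κC c) i - σ k i)))
        linarith [h3]
      calc ∑ i, ∑ j, |u (k, c, d) * σ (κC c) i * τ d j * g k i j
              - u (k, c, d) * σ k i * τ d j * g k i j|
            ≤ ∑ i, ∑ j, (u (k, c, d) * τ d j) * |σ (κC c) i - σ k i| :=
              Finset.sum_le_sum fun i _ => Finset.sum_le_sum fun j _ => step i j
        _ = ∑ i, u (k, c, d) * |σ (κC c) i - σ k i| := by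
              refine Finset.sum_congr rfl fun i _ => ?_
              rw [← Finset.sum_mul, ← Finset.mul_sum, (hτ d).2, mul_one]
        _ = u (k, c, d) * ∑ i, |σ (κC c) i - σ k i| := by rw [Finset.mul_sum]
        _ ≤ u (k, c, d) * 2 :=
              mul_le_mul_of_nonneg_left (sum_abs_sub_le hσ _ _) (hu.1 _)
        _ = 2 * u (k, c, d) := by ring
  calc |∑ k, ∑ c, ∑ d, ∑ i, ∑ j,
        (u (k, c, d) * σ (κC c) i * τ d j * g k i j
          - u (k, c, d) * σ k i * τ d j * g k i j)|
      ≤ ∑ k, ∑ c, ∑ d, ∑ i, ∑ j,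
        |u (k, c, d) * σ (κC c) i * τ d j * g k i j
          - u (k, c, d) * σ k i * τ d j * g k i j| := by
        refine (Finset.abs_sum_le_sum_abs _ _).trans (Finset.sum_le_sum fun k _ => ?_)
        refine (Finset.abs_sum_le_sum_abs _ _).trans (Finset.sum_le_sum fun c _ => ?_)
        refine (Finset.abs_sum_le_sum_abs _ _).trans (Finset.sum_le_sum fun d _ => ?_)
        exact (Finset.abs_sum_le_sum_abs _ _).trans (Finset.sum_le_sum fun i _ =>
          Finset.abs_sum_le_sum_abs _ _)
    _ ≤ ∑ k, ∑ c, ∑ d, 2 * (if κC c = k then 0 else u (k, c, d)) :=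
        Finset.sum_le_sum fun k _ => Finset.sum_le_sum fun c _ =>
          Finset.sum_le_sum fun d _ => key k c d
    _ = 2 * ∑ k, ∑ c, ∑ d, (if κC c = k then 0 else u (k, c, d)) := by
        simp only [Finset.mul_sum]

end
noncomputable section
open Finset
open scoped Classical

private lemma coreR {K C D I J : Type*} [Fintype K] [Fintype C] [Fintype D]
    [Fintype I] [Fintype J] [DecidableEq K] [Nonempty I]
    (u : K × C × D → ℝ) (hu : IsDist u) (v : K × K × K → ℝ)
    (hv : ∀ k k₁ k₂, v (k, k₁, k₂)
      = if k₁ = k ∧ k₂ = k then (∑ c, ∑ d, u (k, c, d)) else 0)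
    (g : K → I → J → ℝ) (hg : Bounded1 g) (κD : D → K)
    (σ : C → I → ℝ) (hσ : IsKernel σ) :
    ∃ σ' : K → I → ℝ, IsKernel σ' ∧ ∀ τ' : K → J → ℝ, IsKernel τ' →
      |pay u g σ (fun d => τ' (κD d)) - pay v g σ' τ'| ≤
        2 * ∑ k, ∑ c, ∑ d, (if κD d = k then 0 else u (k, c, d)) := by
  set P : K → ℝ := fun k => ∑ c, ∑ d, u (k, c, d) with hP
  set S : K → I → ℝ := fun k i => ∑ c, ∑ d, u (k, c, d) * σ c i with hS
  have hSnn : ∀ k i, 0 ≤ S k i := fun k i =>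
    Finset.sum_nonneg fun c _ => Finset.sum_nonneg fun d _ =>
      mul_nonneg (hu.1 _) ((hσ c).1 i)
  have hPnn : ∀ k, 0 ≤ P k := fun k =>
    Finset.sum_nonneg fun c _ => Finset.sum_nonneg fun d _ => hu.1 _
  have hSsum : ∀ k, ∑ i, S k i = P k := by
    intro k
    rw [hS, hP]
    simp only
    rw [Finset.sum_comm]
    refine Finset.sum_congr rfl fun c _ => ?_
    rw [Finset.sum_comm]
    refine Finset.sum_congr rfl fun d _ => ?_
    rw [← Finset.mul_sum, (hσ c).2, mul_one]
  set σ' : K → I → ℝ := fun k i =>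
    if 0 < P k then S k i / P k else 1 / Fintype.card I with hσ'
  have hker : IsKernel σ' := by
    intro k
    constructor
    · intro i
      rw [hσ']
      simp only
      split_ifs with h
      · exact div_nonneg (hSnn k i) (hPnn k)
      · positivity
    · rw [hσ']
      simp only
      split_ifs with h
      · rw [← Finset.sum_div, hSsum k, div_self (ne_of_gt h)]
      · have hcard : (Fintype.card I : ℝ) ≠ 0 := by simp [Fintype.card_ne_zero]
        rw [Finset.sum_const, Finset.card_univ, nsmul_eq_mul]
        field_simp
  refine ⟨σ', hker, ?_⟩
  intro τ' hτ'
  have claim1 : pay v g σ' τ' = ∑ k, ∑ i, ∑ j, S k i * τ' k j * g k i j := by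
    rw [pay_v_eq u v hv g σ' τ']
    refine Finset.sum_congr rfl fun k _ => ?_
    by_cases hPk : 0 < P k
    · rw [Finset.mul_sum]
      refine Finset.sum_congr rfl fun i _ => ?_
      rw [Finset.mul_sum]
      refine Finset.sum_congr rfl fun j _ => ?_
      rw [hσ']
      simp only [if_pos hPk]
      field_simp
      try ring
    · have hu0 : ∀ c d, u (k, c, d) = 0 := u_zero_of_P_zero hu.1 hPk
      have hS0 : ∀ i, S k i = 0 := fun i => by
        rw [hS]
        exact Finset.sum_eq_zero fun c _ => Finset.sum_eq_zero fun d _ => by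
          rw [hu0 c d, zero_mul]
      have hL : (∑ c, ∑ d, u (k, c, d)) = (0:ℝ) := by
        exact Finset.sum_eq_zero fun c _ => Finset.sum_eq_zero fun d _ => hu0 c d
      rw [hL, zero_mul]
      exact (Finset.sum_eq_zero fun i _ => Finset.sum_eq_zero fun j _ => by
        rw [hS0 i]; ring).symm
  have claim1' : (∑ k, ∑ i, ∑ j, S k i * τ' k j * g k i j)
      = ∑ k, ∑ c, ∑ d, ∑ i, ∑ j, u (k, c, d) * σ c i * τ' k j * g k i j := by
    refine Finset.sum_congr rfl fun k _ => ?_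
    rw [sum4']
    refine (Finset.sum_congr rfl fun i _ => Finset.sum_congr rfl fun j _ => ?_)
    calc S k i * τ' k j * g k i j
        = (∑ c, ∑ d, u (k, c, d) * σ c i) * (τ' k j * g k i j) := by rw [hS]; ring
      _ = ∑ c, ∑ d, (u (k, c, d) * σ c i) * (τ' k j * g k i j) := by
          simp only [Finset.sum_mul]
      _ = ∑ c, ∑ d, u (k, c, d) * σ c i * τ' k j * g k i j :=
          Finset.sum_congr rfl fun c _ => Finset.sum_congr rfl fun d _ => by ring
  rw [claim1, claim1']
  have hdiff : pay u g σ (fun d => τ' (κD d))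
        - ∑ k, ∑ c, ∑ d, ∑ i, ∑ j, u (k, c, d) * σ c i * τ' k j * g k i j
      = ∑ k, ∑ c, ∑ d, ∑ i, ∑ j,
          (u (k, c, d) * σ c i * τ' (κD d) j * g k i j
            - u (k, c, d) * σ c i * τ' k j * g k i j) := by
    simp only [pay, ← Finset.sum_sub_distrib]
  rw [hdiff]
  have key : ∀ k c d, ∑ i, ∑ j,
      |u (k, c, d) * σ c i * τ' (κD d) j * g k i j
        - u (k, c, d) * σ c i * τ' k j * g k i j|
      ≤ 2 * (if κD d = k then 0 else u (k, c, d)) := by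
    intro k c d
    by_cases hkd : κD d = k
    · simp [hkd]
    · rw [if_neg hkd]
      have step : ∀ i j, |u (k, c, d) * σ c i * τ' (κD d) j * g k i j
          - u (k, c, d) * σ c i * τ' k j * g k i j|
          ≤ (u (k, c, d) * σ c i) * |τ' (κD d) j - τ' k j| := by
        intro i j
        have e : u (k, c, d) * σ c i * τ' (κD d) j * g k i j
            - u (k, c, d) * σ c i * τ' k j * g k i j
            = ((u (k, c, d) * σ c i) * (τ' (κD d) j - τ' k j)) * g k i j := by ring
        rw [e, abs_mul]
        have h2 : |u (k, c, d) * σ c i * (τ' (κD d) j - τ' k j)|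
            = u (k, c, d) * σ c i * |τ' (κD d) j - τ' k j| := by
          rw [abs_mul, abs_of_nonneg (mul_nonneg (hu.1 _) ((hσ c).1 i))]
        rw [h2]
        have h3 := mul_le_mul_of_nonneg_left (hg k i j)
          (mul_nonneg (mul_nonneg (hu.1 (k, c, d)) ((hσ c).1 i))
            (abs_nonneg (τ' (κD d) j - τ' k j)))
        linarith [h3]
      calc ∑ i, ∑ j, |u (k, c, d) * σ c i * τ' (κD d) j * g k i j
              - u (k, c, d) * σ c i * τ' k j * g k i j|
            ≤ ∑ i, ∑ j, (u (k, c, d) * σ c i) * |τ' (κD d) j - τ' k j| :=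
              Finset.sum_le_sum fun i _ => Finset.sum_le_sum fun j _ => step i j
        _ = ∑ i, (u (k, c, d) * σ c i) * ∑ j, |τ' (κD d) j - τ' k j| := by
              refine Finset.sum_congr rfl fun i _ => ?_
              rw [← Finset.mul_sum]
        _ ≤ ∑ i, (u (k, c, d) * σ c i) * 2 :=
              Finset.sum_le_sum fun i _ => mul_le_mul_of_nonneg_left
                (sum_abs_sub_le hτ' _ _) (mul_nonneg (hu.1 _) ((hσ c).1 i))
        _ = 2 * u (k, c, d) := by
              rw [← Finset.sum_mul, ← Finset.mul_sum, (hσ c).2, mul_one]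
              ring
  calc |∑ k, ∑ c, ∑ d, ∑ i, ∑ j,
        (u (k, c, d) * σ c i * τ' (κD d) j * g k i j
          - u (k, c, d) * σ c i * τ' k j * g k i j)|
      ≤ ∑ k, ∑ c, ∑ d, ∑ i, ∑ j,
        |u (k, c, d) * σ c i * τ' (κD d) j * g k i j
          - u (k, c, d) * σ c i * τ' k j * g k i j| := by
        refine (Finset.abs_sum_le_sum_abs _ _).trans (Finset.sum_le_sum fun k _ => ?_)
        refine (Finset.abs_sum_le_sum_abs _ _).trans (Finset.sum_le_sum fun c _ => ?_)
        refine (Finset.abs_sum_le_sum_abs _ _).trans (Finset.sum_le_sum fun d _ => ?_)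
        exact (Finset.abs_sum_le_sum_abs _ _).trans (Finset.sum_le_sum fun i _ =>
          Finset.abs_sum_le_sum_abs _ _)
    _ ≤ ∑ k, ∑ c, ∑ d, 2 * (if κD d = k then 0 else u (k, c, d)) :=
        Finset.sum_le_sum fun k _ => Finset.sum_le_sum fun c _ =>
          Finset.sum_le_sum fun d _ => key k c d
    _ = 2 * ∑ k, ∑ c, ∑ d, (if κD d = k then 0 else u (k, c, d)) := by
        simp only [Finset.mul_sum]

end
noncomputable section
open Finset

private lemma gameVal_close {K C D C' D' I J : Type*} [Fintype K] [Fintype C] [Fintype D]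
    [Fintype C'] [Fintype D'] [Fintype I] [Fintype J] [Nonempty I] [Nonempty J]
    (u : K × C × D → ℝ) (hu : IsDist u) (v : K × C' × D' → ℝ) (hv : IsDist v)
    (g : K → I → J → ℝ) (hg : Bounded1 g) (δ : ℝ)
    (h : ∀ σ' : C' → I → ℝ, IsKernel σ' → ∃ σ : C → I → ℝ, IsKernel σ ∧
      ∀ τ : D → J → ℝ, IsKernel τ → ∃ τ' : D' → J → ℝ, IsKernel τ' ∧
        pay v g σ' τ' - δ ≤ pay u g σ τ) :
    gameVal v g ≤ gameVal u g + δ := by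
  have huk : IsKernel (fun (_ : C) (_ : I) => (1 : ℝ) / Fintype.card I) := unif_kernel
  have hvk : IsKernel (fun (_ : C') (_ : I) => (1 : ℝ) / Fintype.card I) := unif_kernel
  -- lower bound sets
  have hTlow : ∀ (σ : C → I → ℝ), IsKernel σ →
      BddBelow {y : ℝ | ∃ τ : D → J → ℝ, IsKernel τ ∧ y = pay u g σ τ} := by
    intro σ hσ
    refine ⟨-1, ?_⟩
    rintro y ⟨τ, hτ, rfl⟩
    have := pay_abs_le hu hg hσ hτ
    linarith [abs_le.mp this |>.1]
  have hTlow' : ∀ (σ : C' → I → ℝ), IsKernel σ →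
      BddBelow {y : ℝ | ∃ τ : D' → J → ℝ, IsKernel τ ∧ y = pay v g σ τ} := by
    intro σ hσ
    refine ⟨-1, ?_⟩
    rintro y ⟨τ, hτ, rfl⟩
    have := pay_abs_le hv hg hσ hτ
    linarith [abs_le.mp this |>.1]
  have hTne : ∀ (σ : C → I → ℝ),
      {y : ℝ | ∃ τ : D → J → ℝ, IsKernel τ ∧ y = pay u g σ τ}.Nonempty :=
    fun σ => ⟨_, (fun (_ : D) (_ : J) => (1 : ℝ) / Fintype.card J), unif_kernel, rfl⟩
  have hSu_bdd : BddAbove {x : ℝ | ∃ σ : C → I → ℝ, IsKernel σ ∧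
      x = sInf {y : ℝ | ∃ τ : D → J → ℝ, IsKernel τ ∧ y = pay u g σ τ}} := by
    refine ⟨1, ?_⟩
    rintro x ⟨σ, hσ, rfl⟩
    have hmem : pay u g σ (fun (_ : D) (_ : J) => (1 : ℝ) / Fintype.card J)
        ∈ {y : ℝ | ∃ τ : D → J → ℝ, IsKernel τ ∧ y = pay u g σ τ} :=
      ⟨_, unif_kernel, rfl⟩
    have h1 := csInf_le (hTlow σ hσ) hmem
    have h2 := pay_abs_le hu hg hσ (unif_kernel (A := D) (I := J))
    have := abs_le.mp h2 |>.2
    exact h1.trans this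
  have hSv_ne : {x : ℝ | ∃ σ : C' → I → ℝ, IsKernel σ ∧
      x = sInf {y : ℝ | ∃ τ : D' → J → ℝ, IsKernel τ ∧ y = pay v g σ τ}}.Nonempty :=
    ⟨_, (fun (_ : C') (_ : I) => (1 : ℝ) / Fintype.card I), unif_kernel, rfl⟩
  rw [gameVal, gameVal]
  refine csSup_le hSv_ne ?_
  rintro x ⟨σ', hσ', rfl⟩
  obtain ⟨σ, hσ, hστ⟩ := h σ' hσ'
  have key : sInf {y : ℝ | ∃ τ' : D' → J → ℝ, IsKernel τ' ∧ y = pay v g σ' τ'}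
      ≤ sInf {y : ℝ | ∃ τ : D → J → ℝ, IsKernel τ ∧ y = pay u g σ τ} + δ := by
    rw [← sub_le_iff_le_add]
    refine le_csInf (hTne σ) ?_
    rintro y ⟨τ, hτ, rfl⟩
    obtain ⟨τ', hτ', hle⟩ := hστ τ hτ
    have hmem : pay v g σ' τ'
        ∈ {y : ℝ | ∃ τ' : D' → J → ℝ, IsKernel τ' ∧ y = pay v g σ' τ'} :=
      ⟨τ', hτ', rfl⟩
    have := csInf_le (hTlow' σ' hσ') hmem
    linarith
  have hmemu : sInf {y : ℝ | ∃ τ : D → J → ℝ, IsKernel τ ∧ y = pay u g σ τ}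
      ∈ {x : ℝ | ∃ σ : C → I → ℝ, IsKernel σ ∧
        x = sInf {y : ℝ | ∃ τ : D → J → ℝ, IsKernel τ ∧ y = pay u g σ τ}} :=
    ⟨σ, hσ, rfl⟩
  have := le_csSup hSu_bdd hmemu
  linarith

end
theorem stmt9 {K C D : Type*} [Fintype K] [Fintype C] [Fintype D] [DecidableEq K]
    (u : K × C × D → ℝ) (hu : IsDist u) (ε : ℝ) (hε : 0 ≤ ε)
    (κC : C → K) (κD : D → K)
    -- ε-knowledge of the state for player 1:
    (h1 : 1 - ε ≤ ∑ c, if (1 - ε) * (∑ k, ∑ d, u (k, c, d)) ≤ ∑ d, u (κC c, c, d)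
        then (∑ k, ∑ d, u (k, c, d)) else 0)
    -- ε-knowledge of the state for player 2:
    (h2 : 1 - ε ≤ ∑ d, if (1 - ε) * (∑ k, ∑ c, u (k, c, d)) ≤ ∑ c, u (κD d, c, d)
        then (∑ k, ∑ c, u (k, c, d)) else 0)
    (v : K × K × K → ℝ)
    (hv : ∀ k k₁ k₂, v (k, k₁, k₂)
      = if k₁ = k ∧ k₂ = k then (∑ c, ∑ d, u (k, c, d)) else 0) :
    valueDist u v ≤ 20 * ε := by
  have husum : ∑ k, ∑ c, ∑ d, u (k, c, d) = 1 := by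
    have := hu.2
    simpa [Fintype.sum_prod_type] using this
  have hvdist : IsDist v := by
    constructor
    · rintro ⟨k, k₁, k₂⟩
      rw [hv]
      split_ifs
      · exact Finset.sum_nonneg fun c _ => Finset.sum_nonneg fun d _ => hu.1 _
      · exact le_rfl
    · have hk : ∀ k : K, ∑ k₁, ∑ k₂, v (k, k₁, k₂) = ∑ c, ∑ d, u (k, c, d) := by
        intro k
        simp [hv, ite_and, Finset.sum_ite_eq']
      calc ∑ a, v a = ∑ k, ∑ k₁, ∑ k₂, v (k, k₁, k₂) := by
            simp [Fintype.sum_prod_type]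
        _ = ∑ k, ∑ c, ∑ d, u (k, c, d) := Finset.sum_congr rfl fun k _ => hk k
        _ = 1 := husum
  have hB1 : ∑ k, ∑ c, ∑ d, (if κC c = k then 0 else u (k, c, d)) ≤ 2 * ε := by
    have hb := badmass (fun k c => ∑ d, u (k, c, d))
      (fun k c => Finset.sum_nonneg fun d _ => hu.1 _) husum κC ε hε h1
    calc ∑ k, ∑ c, ∑ d, (if κC c = k then 0 else u (k, c, d))
        = ∑ k, ∑ c, (if κC c = k then 0 else ∑ d, u (k, c, d)) := by
          refine Finset.sum_congr rfl fun k _ => Finset.sum_congr rfl fun c _ => ?_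
          split_ifs <;> simp
      _ ≤ 2 * ε := hb
  have hB2 : ∑ k, ∑ c, ∑ d, (if κD d = k then 0 else u (k, c, d)) ≤ 2 * ε := by
    have husum2 : ∑ k, ∑ d, ∑ c, u (k, c, d) = 1 := by
      rw [← husum]
      exact Finset.sum_congr rfl fun k _ => Finset.sum_comm
    have hb := badmass (fun k d => ∑ c, u (k, c, d))
      (fun k d => Finset.sum_nonneg fun c _ => hu.1 _) husum2 κD ε hε h2
    calc ∑ k, ∑ c, ∑ d, (if κD d = k then 0 else u (k, c, d))
        = ∑ k, ∑ d, (if κD d = k then 0 else ∑ c, u (k, c, d)) := by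
          refine Finset.sum_congr rfl fun k _ => ?_
          rw [Finset.sum_comm]
          refine Finset.sum_congr rfl fun d _ => ?_
          split_ifs <;> simp
      _ ≤ 2 * ε := hb
  refine Real.sSup_le ?_ (by linarith)
  rintro x ⟨m, n, g, hg, rfl⟩
  have d1 : gameVal v g ≤ gameVal u g + 4 * ε := by
    refine gameVal_close u hu v hvdist g hg (4 * ε) ?_
    intro σ' hσ'
    refine ⟨fun c => σ' (κC c), fun c => hσ' (κC c), ?_⟩
    intro τ hτ
    obtain ⟨τ', hker, hbound⟩ := coreL u hu v hv g hg κC σ' hσ' τ hτ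
    refine ⟨τ', hker, ?_⟩
    have h := abs_le.mp hbound
    have := h.1
    linarith
  have d2 : gameVal u g ≤ gameVal v g + 4 * ε := by
    refine gameVal_close v hvdist u hu g hg (4 * ε) ?_
    intro σ hσ
    obtain ⟨σ', hker, hbound⟩ := coreR u hu v hv g hg κD σ hσ
    refine ⟨σ', hker, ?_⟩
    intro τ' hτ'
    refine ⟨fun d => τ' (κD d), fun d => hτ' (κD d), ?_⟩
    have h := abs_le.mp (hbound τ' hτ')
    have := h.2
    linarith
  have : |gameVal u g - gameVal v g| ≤ 4 * ε :=
    abs_le.mpr ⟨by linarith, by linarith⟩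
  linarith
end

section
/- Let u' ∈ Δ(K × (K_C × C) × (K_D × D)) extend an ε-knowledge structure u by appending k_C = κ(c) and k_D = κ(d) to the players' signals. Then u'({k_C ≠ k or k_D ≠ k}) ≤ 4ε, and player 1's signal c is 16ε-conditionally independent from (k, k_D) given k_C under u'. -/
open scoped BigOperators

lemma aux_know {C : Type*} [Fintype C] (p q : C → ℝ) (hq : ∀ c, 0 ≤ q c)
    (hsum : ∑ c, p c = 1) (hp : ∀ c, 0 ≤ p c) (ε : ℝ) (hε : 0 ≤ ε)
    (h : 1 - ε ≤ ∑ c, if (1 - ε) * p c ≤ q c then p c else 0) :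
    ∑ c, (p c - q c) ≤ 2 * ε := by
  set S := ∑ c, if (1 - ε) * p c ≤ q c then p c else 0 with hS
  have hS1 : S ≤ 1 := by
    rw [hS, ← hsum]
    refine Finset.sum_le_sum fun c _ => ?_
    split_ifs <;> simp [hp c]
  have key : ∀ c, p c - q c ≤ ε * (if (1 - ε) * p c ≤ q c then p c else 0)
      + (p c - (if (1 - ε) * p c ≤ q c then p c else 0)) := by
    intro c
    split_ifs with hh
    · nlinarith [hp c]
    · nlinarith [hq c]
  calc ∑ c, (p c - q c) ≤ ∑ c, (ε * (if (1 - ε) * p c ≤ q c then p c else 0)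
      + (p c - (if (1 - ε) * p c ≤ q c then p c else 0))) :=
        Finset.sum_le_sum fun c _ => key c
    _ = ε * S + (1 - S) := by
        rw [Finset.sum_add_distrib, ← Finset.mul_sum, Finset.sum_sub_distrib, hsum]
    _ ≤ 2 * ε := by nlinarith


section Aux
variable {K C D : Type*} [Fintype K] [Fintype C] [Fintype D] [DecidableEq K]

/-- marginal on c -/
def pC (u : K × C × D → ℝ) (c : C) : ℝ := ∑ k, ∑ d, u (k, c, d)

def aF (u : K × C × D → ℝ) (κD : D → K) (c : C) (k kd : K) : ℝ :=
  ∑ d, if kd = κD d then u (k, c, d) else 0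

def eF (u : K × C × D → ℝ) (κC : C → K) (κD : D → K) (kc k kd : K) : ℝ :=
  ∑ c, if kc = κC c then aF u κD c k kd else 0

def fF (u : K × C × D → ℝ) (κC : C → K) (kc : K) : ℝ :=
  ∑ c, if kc = κC c then pC u c else 0

set_option linter.unusedSectionVars false

variable (u : K × C × D → ℝ) (κC : C → K) (κD : D → K)

lemma pC_nonneg (hu : ∀ x, 0 ≤ u x) (c : C) : 0 ≤ pC u c :=
  Finset.sum_nonneg fun _ _ => Finset.sum_nonneg fun _ _ => hu _

lemma aF_nonneg (hu : ∀ x, 0 ≤ u x) (c : C) (k kd : K) : 0 ≤ aF u κD c k kd :=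
  Finset.sum_nonneg fun d _ => by split_ifs <;> simp [hu _]

lemma aF_le_pC (hu : ∀ x, 0 ≤ u x) (c : C) (k kd : K) : aF u κD c k kd ≤ pC u c := by
  have h1 : aF u κD c k kd ≤ ∑ d, u (k, c, d) :=
    Finset.sum_le_sum fun d _ => by split_ifs <;> simp [hu _]
  refine h1.trans ?_
  exact Finset.single_le_sum (f := fun k' => ∑ d, u (k', c, d))
    (fun k' _ => Finset.sum_nonneg fun d _ => hu _) (Finset.mem_univ k)

lemma aF_sum (c : C) : ∑ k, ∑ kd, aF u κD c k kd = pC u c := by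
  unfold aF pC
  refine Finset.sum_congr rfl fun k _ => ?_
  rw [Finset.sum_comm]
  simp

lemma eF_nonneg (hu : ∀ x, 0 ≤ u x) (kc k kd : K) : 0 ≤ eF u κC κD kc k kd :=
  Finset.sum_nonneg fun c _ => by split_ifs <;> simp [aF_nonneg u κD hu]

lemma eF_le_fF (hu : ∀ x, 0 ≤ u x) (kc k kd : K) : eF u κC κD kc k kd ≤ fF u κC kc :=
  Finset.sum_le_sum fun c _ => by split_ifs <;> simp [aF_le_pC u κD hu]

lemma fF_nonneg (hu : ∀ x, 0 ≤ u x) (kc : K) : 0 ≤ fF u κC kc :=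
  Finset.sum_nonneg fun c _ => by split_ifs <;> simp [pC_nonneg u hu]

set_option linter.unusedSectionVars false

lemma eF_sum (kc : K) : ∑ k, ∑ kd, eF u κC κD kc k kd = fF u κC kc := by
  unfold eF fF
  calc ∑ k, ∑ kd, ∑ c, (if kc = κC c then aF u κD c k kd else 0)
      = ∑ k, ∑ c, ∑ kd, (if kc = κC c then aF u κD c k kd else 0) :=
        Finset.sum_congr rfl fun k _ => Finset.sum_comm
    _ = ∑ c, ∑ k, ∑ kd, (if kc = κC c then aF u κD c k kd else 0) := Finset.sum_comm
    _ = ∑ c, (if kc = κC c then pC u c else 0) := by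
        refine Finset.sum_congr rfl fun c _ => ?_
        by_cases h : kc = κC c <;> simp [h, aF_sum u κD c]

lemma fF_sum (hsum : ∑ c, pC u c = 1) : ∑ kc, fF u κC kc = 1 := by
  unfold fF
  rw [Finset.sum_comm, ← hsum]
  simp

lemma eF_diag_sum : ∑ kc, eF u κC κD kc kc kc = ∑ c, aF u κD c (κC c) (κC c) := by
  unfold eF
  rw [Finset.sum_comm]
  refine Finset.sum_congr rfl fun c _ => ?_
  simp


lemma sum_ite_ne {f : K → ℝ} (b : K) : ∑ k, (if k = b then 0 else f k) = (∑ k, f k) - f b := by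
  have h : ∀ k, (if k = b then (0:ℝ) else f k) = f k - (if k = b then f k else 0) := by
    intro k; split_ifs <;> ring
  simp only [h, Finset.sum_sub_distrib]
  simp

lemma E1eq : ∑ k, ∑ c, ∑ d, (if k = κC c then 0 else u (k, c, d))
    = ∑ c, (pC u c - ∑ d, u (κC c, c, d)) := by
  rw [Finset.sum_comm]
  refine Finset.sum_congr rfl fun c _ => ?_
  have h : ∀ k, (∑ d, if k = κC c then 0 else u (k, c, d))
      = if k = κC c then 0 else ∑ d, u (k, c, d) := by
    intro k; split_ifs <;> simp
  simp only [h, sum_ite_ne]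
  rfl

lemma E2eq : ∑ k, ∑ c, ∑ d, (if k = κD d then 0 else u (k, c, d))
    = ∑ d, ((∑ k, ∑ c, u (k, c, d)) - ∑ c, u (κD d, c, d)) := by
  calc ∑ k, ∑ c, ∑ d, (if k = κD d then 0 else u (k, c, d))
      = ∑ k, ∑ d, ∑ c, (if k = κD d then 0 else u (k, c, d)) :=
        Finset.sum_congr rfl fun k _ => Finset.sum_comm
    _ = ∑ d, ∑ k, ∑ c, (if k = κD d then 0 else u (k, c, d)) := Finset.sum_comm
    _ = ∑ d, ((∑ k, ∑ c, u (k, c, d)) - ∑ c, u (κD d, c, d)) := by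
        refine Finset.sum_congr rfl fun d _ => ?_
        have h : ∀ k, (∑ c, if k = κD d then 0 else u (k, c, d))
            = if k = κD d then 0 else ∑ c, u (k, c, d) := by
          intro k; split_ifs <;> simp
        simp only [h, sum_ite_ne]

lemma one_sub_T (hu : ∀ x, 0 ≤ u x) :
    (∑ k, ∑ c, ∑ d, u (k, c, d)) - (∑ c, aF u κD c (κC c) (κC c))
      ≤ (∑ k, ∑ c, ∑ d, (if k = κC c then 0 else u (k, c, d)))
        + (∑ k, ∑ c, ∑ d, (if k = κD d then 0 else u (k, c, d))) := by
  have hT : ∑ c, aF u κD c (κC c) (κC c)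
      = ∑ k, ∑ c, ∑ d, (if k = κC c ∧ κC c = κD d then u (k, c, d) else 0) := by
    rw [Finset.sum_comm]
    refine Finset.sum_congr rfl fun c _ => ?_
    rw [Finset.sum_eq_single (κC c) (fun b _ hb => by simp [hb]) (by simp)]
    unfold aF
    simp
  have hpt : ∀ k c d, u (k, c, d) - (if k = κC c ∧ κC c = κD d then u (k, c, d) else 0)
      ≤ (if k = κC c then 0 else u (k, c, d)) + (if k = κD d then 0 else u (k, c, d)) := by
    intro k c d
    have h0 := hu (k, c, d)
    by_cases h1 : k = κC c ∧ κC c = κD d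
    · have hb : k = κC c := h1.1
      have hc : k = κD d := h1.1.trans h1.2
      simp [h1, hb, hc]
    · rw [if_neg h1]
      by_cases h2 : k = κC c
      · have h3 : k ≠ κD d := fun hc => h1 ⟨h2, h2.symm.trans hc⟩
        have h4 : κC c ≠ κD d := fun h => h3 (h2.trans h)
        simp [h2, h3, h4]
      · rw [if_neg h2]; split_ifs <;> linarith
  calc (∑ k, ∑ c, ∑ d, u (k, c, d)) - (∑ c, aF u κD c (κC c) (κC c))
      = ∑ k, ∑ c, ∑ d, (u (k, c, d) - (if k = κC c ∧ κC c = κD d then u (k, c, d) else 0)) := by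
        rw [hT]; simp [Finset.sum_sub_distrib]
    _ ≤ ∑ k, ∑ c, ∑ d, ((if k = κC c then 0 else u (k, c, d)) + (if k = κD d then 0 else u (k, c, d))) := by
        refine Finset.sum_le_sum fun k _ => Finset.sum_le_sum fun c _ => Finset.sum_le_sum fun d _ => hpt k c d
    _ = _ := by simp [Finset.sum_add_distrib]

lemma part1_pt (hu : ∀ x, 0 ≤ u x) :
    (∑ k, ∑ c, ∑ d, (if κC c ≠ k ∨ κD d ≠ k then u (k, c, d) else 0))
      ≤ (∑ k, ∑ c, ∑ d, (if k = κC c then 0 else u (k, c, d)))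
        + (∑ k, ∑ c, ∑ d, (if k = κD d then 0 else u (k, c, d))) := by
  have hpt : ∀ k c d, (if κC c ≠ k ∨ κD d ≠ k then u (k, c, d) else 0)
      ≤ (if k = κC c then 0 else u (k, c, d)) + (if k = κD d then 0 else u (k, c, d)) := by
    intro k c d
    have h0 := hu (k, c, d)
    by_cases h2 : k = κC c
    · by_cases h3 : k = κD d
      · have hno : ¬(κC c ≠ k ∨ κD d ≠ k) := by push_neg; exact ⟨h2.symm, h3.symm⟩
        rw [if_neg hno, if_pos h2, if_pos h3]
        norm_num
      · have h3' : κD d ≠ k := fun h => h3 h.symm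
        rw [if_pos (Or.inr h3'), if_pos h2, if_neg h3]
        linarith
    · have h2' : κC c ≠ k := fun h => h2 h.symm
      simp only [if_neg h2]
      rw [if_pos (Or.inl h2')]
      split_ifs <;> linarith
  calc (∑ k, ∑ c, ∑ d, (if κC c ≠ k ∨ κD d ≠ k then u (k, c, d) else 0))
      ≤ ∑ k, ∑ c, ∑ d, ((if k = κC c then 0 else u (k, c, d)) + (if k = κD d then 0 else u (k, c, d))) :=
        Finset.sum_le_sum fun k _ => Finset.sum_le_sum fun c _ => Finset.sum_le_sum fun d _ => hpt k c d
    _ = _ := by simp [Finset.sum_add_distrib]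

lemma sum1_eval (hu : ∀ x, 0 ≤ u x) :
    (∑ kc, ∑ c, ∑ k, ∑ kd, (if kc = κC c then
        |aF u κD c k kd - (if k = kc ∧ kd = kc then pC u c else 0)| else 0))
    = 2 * ((∑ c, pC u c) - ∑ c, aF u κD c (κC c) (κC c)) := by
  rw [Finset.sum_comm]
  have step : ∀ c, (∑ kc, ∑ k, ∑ kd, (if kc = κC c then
        |aF u κD c k kd - (if k = kc ∧ kd = kc then pC u c else 0)| else 0))
      = 2 * (pC u c - aF u κD c (κC c) (κC c)) := by
    intro c
    rw [Finset.sum_eq_single (κC c) (fun b _ hb => by simp [hb]) (by simp)]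
    simp only [eq_self_iff_true, if_true]
    have pt : ∀ k kd, |aF u κD c k kd - (if k = κC c ∧ kd = κC c then pC u c else 0)|
        = aF u κD c k kd + (if k = κC c ∧ kd = κC c then pC u c - 2 * aF u κD c k kd else 0) := by
      intro k kd
      by_cases h : k = κC c ∧ kd = κC c
      · rw [if_pos h, if_pos h, abs_of_nonpos (by linarith [aF_le_pC u κD hu c k kd])]; ring
      · rw [if_neg h, if_neg h, sub_zero, abs_of_nonneg (aF_nonneg u κD hu c k kd), add_zero]
    simp only [pt, Finset.sum_add_distrib]
    rw [aF_sum]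
    have hcoll : (∑ k, ∑ kd, (if k = κC c ∧ kd = κC c then pC u c - 2 * aF u κD c k kd else 0))
        = pC u c - 2 * aF u κD c (κC c) (κC c) := by
      rw [Finset.sum_eq_single (κC c) (fun b _ hb => by simp [hb]) (by simp)]
      simp
    rw [hcoll]; ring
  rw [Finset.sum_congr rfl fun c _ => step c, ← Finset.mul_sum, Finset.sum_sub_distrib]

lemma FW_eval (hu : ∀ x, 0 ≤ u x) (kc : K) :
    fF u κC kc * (∑ k, ∑ kd, |(if k = kc ∧ kd = kc then (1:ℝ) else 0)
        - eF u κC κD kc k kd / fF u κC kc|)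
    = 2 * (fF u κC kc - eF u κC κD kc kc kc) := by
  by_cases hF : fF u κC kc = 0
  · have hE : eF u κC κD kc kc kc = 0 :=
      le_antisymm (hF ▸ eF_le_fF u κC κD hu kc kc kc) (eF_nonneg u κC κD hu kc kc kc)
    rw [hF, hE]; ring
  · have hFpos : 0 < fF u κC kc := lt_of_le_of_ne (fF_nonneg u κC hu kc) (Ne.symm hF)
    have pt : ∀ k kd, |(if k = kc ∧ kd = kc then (1:ℝ) else 0) - eF u κC κD kc k kd / fF u κC kc|
        = eF u κC κD kc k kd / fF u κC kc
          + (if k = kc ∧ kd = kc then 1 - 2 * (eF u κC κD kc kc kc / fF u κC kc) else 0) := by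
      intro k kd
      by_cases h : k = kc ∧ kd = kc
      · have he : eF u κC κD kc k kd = eF u κC κD kc kc kc := by rw [h.1, h.2]
        rw [if_pos h, if_pos h, he,
          abs_of_nonneg (by
            have := (div_le_one hFpos).2 (eF_le_fF u κC κD hu kc kc kc)
            linarith)]
        ring
      · rw [if_neg h, if_neg h, zero_sub, abs_neg,
          abs_of_nonneg (div_nonneg (eF_nonneg u κC κD hu kc k kd) hFpos.le), add_zero]
    simp only [pt, Finset.sum_add_distrib, ← Finset.sum_div]
    rw [eF_sum]
    have hcoll : (∑ k, ∑ kd, (if k = kc ∧ kd = kc then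
          1 - 2 * (eF u κC κD kc kc kc / fF u κC kc) else 0))
        = 1 - 2 * (eF u κC κD kc kc kc / fF u κC kc) := by
      rw [Finset.sum_eq_single kc (fun b _ hb => by simp [hb]) (by simp)]
      simp
    rw [hcoll]
    field_simp
    ring

lemma sum2_eval (hu : ∀ x, 0 ≤ u x) :
    (∑ kc, ∑ c, ∑ k, ∑ kd, (if kc = κC c then pC u c else 0)
        * |(if k = kc ∧ kd = kc then (1:ℝ) else 0) - eF u κC κD kc k kd / fF u κC kc|)
    = 2 * ((∑ kc, fF u κC kc) - ∑ kc, eF u κC κD kc kc kc) := by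
  have step : ∀ kc, (∑ c, ∑ k, ∑ kd, (if kc = κC c then pC u c else 0)
        * |(if k = kc ∧ kd = kc then (1:ℝ) else 0) - eF u κC κD kc k kd / fF u κC kc|)
      = 2 * (fF u κC kc - eF u κC κD kc kc kc) := by
    intro kc
    have factor : ∀ c, (∑ k, ∑ kd, (if kc = κC c then pC u c else 0)
          * |(if k = kc ∧ kd = kc then (1:ℝ) else 0) - eF u κC κD kc k kd / fF u κC kc|)
        = (if kc = κC c then pC u c else 0)
          * (∑ k, ∑ kd, |(if k = kc ∧ kd = kc then (1:ℝ) else 0)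
              - eF u κC κD kc k kd / fF u κC kc|) := by
      intro c
      rw [Finset.mul_sum]
      exact Finset.sum_congr rfl fun k _ => by rw [Finset.mul_sum]
    rw [Finset.sum_congr rfl fun c _ => factor c, ← Finset.sum_mul]
    exact FW_eval u κC κD hu kc
  rw [Finset.sum_congr rfl fun kc _ => step kc, ← Finset.mul_sum, Finset.sum_sub_distrib]

lemma abs_helper (A P E F δ : ℝ) (hP : 0 ≤ P) :
    |A - P * E / F| ≤ |A - δ * P| + P * |δ - E / F| := by
  have h1 : |A - P * E / F| ≤ |A - δ * P| + |δ * P - P * E / F| := abs_sub_le _ _ _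
  have h2 : δ * P - P * E / F = P * (δ - E / F) := by ring
  rw [h2, abs_mul, abs_of_nonneg hP] at h1
  exact h1

end Aux

theorem stmt10 {K C D : Type*} [Fintype K] [Fintype C] [Fintype D] [DecidableEq K]
    (u : K × C × D → ℝ) (hu : IsDist u) (ε : ℝ) (hε : 0 ≤ ε)
    (κC : C → K) (κD : D → K)
    -- ε-knowledge of the state for player 1:
    (h1 : 1 - ε ≤ ∑ c, if (1 - ε) * (∑ k, ∑ d, u (k, c, d)) ≤ ∑ d, u (κC c, c, d)
        then (∑ k, ∑ d, u (k, c, d)) else 0)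
    -- ε-knowledge of the state for player 2:
    (h2 : 1 - ε ≤ ∑ d, if (1 - ε) * (∑ k, ∑ c, u (k, c, d)) ≤ ∑ c, u (κD d, c, d)
        then (∑ k, ∑ c, u (k, c, d)) else 0)
    (u' : K × (K × C) × (K × D) → ℝ)
    (hu' : ∀ k kc c kd d, u' (k, (kc, c), (kd, d))
      = if kc = κC c ∧ kd = κD d then u (k, c, d) else 0) :
    (∑ k, ∑ kc, ∑ c, ∑ kd, ∑ d,
        (if kc ≠ k ∨ kd ≠ k then u' (k, (kc, c), (kd, d)) else 0)) ≤ 4 * ε ∧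
      -- `c` is 16ε-conditionally independent from `(k, k_D)` given `k_C` under `u'`:
      ∑ kc : K, ∑ c : C, ∑ k : K, ∑ kd : K,
          |(∑ d, u' (k, (kc, c), (kd, d)))
            - (∑ k', ∑ kd', ∑ d, u' (k', (kc, c), (kd', d)))
              * (∑ c', ∑ d, u' (k, (kc, c'), (kd, d)))
              / (∑ k', ∑ c', ∑ kd', ∑ d, u' (k', (kc, c'), (kd', d)))| ≤ 16 * ε := by
  
  obtain ⟨hupos, husum⟩ := hu
  have hsum3 : ∑ k, ∑ c, ∑ d, u (k, c, d) = 1 := by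
    rw [← husum]; simp [Fintype.sum_prod_type]
  have hpsum : ∑ c, pC u c = 1 := by rw [← hsum3]; exact Finset.sum_comm
  -- player 1 knowledge bound
  have hE1 : (∑ k, ∑ c, ∑ d, (if k = κC c then 0 else u (k, c, d))) ≤ 2 * ε := by
    rw [E1eq u κC]
    exact aux_know (pC u) (fun c => ∑ d, u (κC c, c, d))
      (fun c => Finset.sum_nonneg fun d _ => hupos _) hpsum (pC_nonneg u hupos) ε hε h1
  -- player 2 knowledge bound
  have hsumD : ∑ d, (∑ k, ∑ c, u (k, c, d)) = 1 := by
    rw [← hsum3]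
    calc ∑ d, ∑ k, ∑ c, u (k, c, d) = ∑ k, ∑ d, ∑ c, u (k, c, d) := Finset.sum_comm
      _ = ∑ k, ∑ c, ∑ d, u (k, c, d) := Finset.sum_congr rfl fun k _ => Finset.sum_comm
  have hE2 : (∑ k, ∑ c, ∑ d, (if k = κD d then 0 else u (k, c, d))) ≤ 2 * ε := by
    rw [E2eq u κD]
    exact aux_know (fun d => ∑ k, ∑ c, u (k, c, d)) (fun d => ∑ c, u (κD d, c, d))
      (fun d => Finset.sum_nonneg fun c _ => hupos _) hsumD
      (fun d => Finset.sum_nonneg fun k _ => Finset.sum_nonneg fun c _ => hupos _) ε hε h2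
  constructor
  · -- part 1
    have key1 : (∑ k, ∑ kc, ∑ c, ∑ kd, ∑ d,
          (if kc ≠ k ∨ kd ≠ k then u' (k, (kc, c), (kd, d)) else 0))
        = ∑ k, ∑ c, ∑ d, (if κC c ≠ k ∨ κD d ≠ k then u (k, c, d) else 0) := by
      refine Finset.sum_congr rfl fun k _ => ?_
      rw [Finset.sum_comm]
      refine Finset.sum_congr rfl fun c _ => ?_
      rw [Finset.sum_eq_single (κC c) (fun b _ hb => by
        refine Finset.sum_eq_zero fun kd _ => Finset.sum_eq_zero fun d _ => ?_
        rw [hu']; simp [hb]) (by simp)]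
      rw [Finset.sum_comm]
      refine Finset.sum_congr rfl fun d _ => ?_
      rw [Finset.sum_eq_single (κD d) (fun b _ hb => by
        rw [hu']; simp [hb]) (by simp)]
      rw [hu']; simp
    rw [key1]
    have := part1_pt u κC κD hupos
    linarith
  · -- part 2
    have hAe : ∀ kc c k kd, (∑ d, u' (k, (kc, c), (kd, d)))
        = if kc = κC c then aF u κD c k kd else 0 := by
      intro kc c k kd
      by_cases hc : kc = κC c
      · rw [if_pos hc]
        refine Finset.sum_congr rfl fun d _ => ?_
        rw [hu']
        by_cases hd : kd = κD d
        · rw [if_pos ⟨hc, hd⟩, if_pos hd]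
        · rw [if_neg (fun h => hd h.2), if_neg hd]
      · rw [if_neg hc]
        exact Finset.sum_eq_zero fun d _ => by rw [hu', if_neg (fun h => hc h.1)]
    have hBe : ∀ kc c, (∑ k', ∑ kd', ∑ d, u' (k', (kc, c), (kd', d)))
        = if kc = κC c then pC u c else 0 := by
      intro kc c
      calc (∑ k', ∑ kd', ∑ d, u' (k', (kc, c), (kd', d)))
          = ∑ k', ∑ kd', (if kc = κC c then aF u κD c k' kd' else 0) :=
            Finset.sum_congr rfl fun k' _ => Finset.sum_congr rfl fun kd' _ => hAe kc c k' kd'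
        _ = if kc = κC c then pC u c else 0 := by
            by_cases hc : kc = κC c <;> simp [hc, aF_sum u κD c]
    have hEe : ∀ kc k kd, (∑ c', ∑ d, u' (k, (kc, c'), (kd, d))) = eF u κC κD kc k kd :=
      fun kc k kd => Finset.sum_congr rfl fun c' _ => hAe kc c' k kd
    have hFe : ∀ kc, (∑ k', ∑ c', ∑ kd', ∑ d, u' (k', (kc, c'), (kd', d))) = fF u κC kc := by
      intro kc
      calc (∑ k', ∑ c', ∑ kd', ∑ d, u' (k', (kc, c'), (kd', d)))
          = ∑ c', ∑ k', ∑ kd', ∑ d, u' (k', (kc, c'), (kd', d)) := Finset.sum_comm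
        _ = ∑ c', (if kc = κC c' then pC u c' else 0) :=
            Finset.sum_congr rfl fun c' _ => hBe kc c'
        _ = fF u κC kc := rfl
    have hmain : (∑ kc : K, ∑ c : C, ∑ k : K, ∑ kd : K,
          |(∑ d, u' (k, (kc, c), (kd, d)))
            - (∑ k', ∑ kd', ∑ d, u' (k', (kc, c), (kd', d)))
              * (∑ c', ∑ d, u' (k, (kc, c'), (kd, d)))
              / (∑ k', ∑ c', ∑ kd', ∑ d, u' (k', (kc, c'), (kd', d)))|)
        = ∑ kc, ∑ c, ∑ k, ∑ kd,
            |(if kc = κC c then aF u κD c k kd else 0)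
              - (if kc = κC c then pC u c else 0) * eF u κC κD kc k kd / fF u κC kc| := by
      refine Finset.sum_congr rfl fun kc _ => Finset.sum_congr rfl fun c _ =>
        Finset.sum_congr rfl fun k _ => Finset.sum_congr rfl fun kd _ => ?_
      rw [hAe, hBe, hEe, hFe]
    rw [hmain]
    have hpt2 : ∀ (kc : K) (c : C) (k kd : K),
        |(if kc = κC c then aF u κD c k kd else 0)
            - (if kc = κC c then pC u c else 0) * eF u κC κD kc k kd / fF u κC kc|
        ≤ (if kc = κC c then
            |aF u κD c k kd - (if k = kc ∧ kd = kc then pC u c else 0)| else 0)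
          + (if kc = κC c then pC u c else 0)
            * |(if k = kc ∧ kd = kc then (1:ℝ) else 0) - eF u κC κD kc k kd / fF u κC kc| := by
      intro kc c k kd
      by_cases hc : kc = κC c
      · simp only [if_pos hc]
        have hh := abs_helper (aF u κD c k kd) (pC u c) (eF u κC κD kc k kd) (fF u κC kc)
          (if k = kc ∧ kd = kc then (1:ℝ) else 0) (pC_nonneg u hupos c)
        rw [show (if k = kc ∧ kd = kc then (1:ℝ) else 0) * pC u c
            = (if k = kc ∧ kd = kc then pC u c else 0) from by split_ifs <;> ring] at hh
        exact hh
      · simp [hc]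
    calc (∑ kc, ∑ c, ∑ k, ∑ kd,
          |(if kc = κC c then aF u κD c k kd else 0)
            - (if kc = κC c then pC u c else 0) * eF u κC κD kc k kd / fF u κC kc|)
        ≤ ∑ kc, ∑ c, ∑ k, ∑ kd,
            ((if kc = κC c then
              |aF u κD c k kd - (if k = kc ∧ kd = kc then pC u c else 0)| else 0)
            + (if kc = κC c then pC u c else 0)
              * |(if k = kc ∧ kd = kc then (1:ℝ) else 0) - eF u κC κD kc k kd / fF u κC kc|) := by
          refine Finset.sum_le_sum fun kc _ => Finset.sum_le_sum fun c _ =>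
            Finset.sum_le_sum fun k _ => Finset.sum_le_sum fun kd _ => hpt2 kc c k kd
      _ = (∑ kc, ∑ c, ∑ k, ∑ kd, (if kc = κC c then
              |aF u κD c k kd - (if k = kc ∧ kd = kc then pC u c else 0)| else 0))
          + (∑ kc, ∑ c, ∑ k, ∑ kd, (if kc = κC c then pC u c else 0)
              * |(if k = kc ∧ kd = kc then (1:ℝ) else 0) - eF u κC κD kc k kd / fF u κC kc|) := by
          simp [Finset.sum_add_distrib]
      _ ≤ 16 * ε := by
          rw [sum1_eval u κC κD hupos, sum2_eval u κC κD hupos, fF_sum u κC hpsum,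
            eF_diag_sum u κC κD, hpsum]
          have hosT := one_sub_T u κC κD hupos
          rw [hsum3] at hosT
          linarith
end

section
/- Let p ∈ (1/2, 1). The single-agent value-based distance between the structure u₁ (one binary experiment of accuracy p about a uniform binary state) and u₂ (two conditionally independent such experiments) equals 2p(1-p)(2p-1). -/
open scoped BigOperators

/-- The single-agent structure induced by `n` conditionally independent binary Blackwell
experiments of accuracy `p` about a uniform binary state; the signal is the number of 1's. -/
noncomputable def uExp (p : ℝ) (n : ℕ) : Fin 2 × Fin (n + 1) → ℝ :=
  fun x => (1 / 2) * (n.choose (x.2 : ℕ) : ℝ) *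
    (if x.1 = 1 then p ^ (x.2 : ℕ) * (1 - p) ^ (n - (x.2 : ℕ))
     else p ^ (n - (x.2 : ℕ)) * (1 - p) ^ (x.2 : ℕ))

lemma myLeSup {n : ℕ} (f : Fin (n+1) → ℝ) (j : Fin (n+1)) : f j ≤ ⨆ i, f i :=
  le_ciSup (Set.Finite.bddAbove (Set.finite_range f)) j

lemma ciSup_eq_max {n : ℕ} (f : Fin (n+1) → ℝ) (j : Fin (n+1)) (h : ∀ i, f i ≤ f j) :
    (⨆ i, f i) = f j :=
  le_antisymm (ciSup_le h) (myLeSup f j)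

lemma exists_ciSup_eq {n : ℕ} (f : Fin (n+1) → ℝ) : ∃ j, (⨆ i, f i) = f j := by
  obtain ⟨j, hj⟩ := Finite.exists_max f
  exact ⟨j, ciSup_eq_max f j hj⟩

lemma val1_one (p : ℝ) (m : ℕ) (g : Fin 2 → Fin (m+1) → ℝ) :
    val1 (uExp p 1) g = (⨆ i, (p/2 * g 0 i + (1-p)/2 * g 1 i))
      + (⨆ i, ((1-p)/2 * g 0 i + p/2 * g 1 i)) := by
  show (∑ c : Fin 2, ⨆ i, ∑ k : Fin 2, uExp p 1 (k, c) * g k i) = _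
  rw [Fin.sum_univ_two]
  congr 1 <;> refine iSup_congr fun i => ?_ <;>
    · rw [Fin.sum_univ_two]; simp [uExp]; try ring

lemma val1_two (p : ℝ) (m : ℕ) (g : Fin 2 → Fin (m+1) → ℝ) :
    val1 (uExp p 2) g = (⨆ i, (p^2/2 * g 0 i + (1-p)^2/2 * g 1 i))
      + (⨆ i, (p*(1-p) * g 0 i + p*(1-p) * g 1 i))
      + (⨆ i, ((1-p)^2/2 * g 0 i + p^2/2 * g 1 i)) := by
  show (∑ c : Fin 3, ⨆ i, ∑ k : Fin 2, uExp p 2 (k, c) * g k i) = _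
  rw [Fin.sum_univ_three]
  congr 1
  · congr 1 <;> refine iSup_congr fun i => ?_ <;>
      · rw [Fin.sum_univ_two]; simp [uExp]; try ring
  · refine iSup_congr fun i => ?_
    rw [Fin.sum_univ_two]; simp [uExp]; try ring

lemma gap_bound (p : ℝ) (hp : 1 / 2 < p) (hp1 : p < 1) (m : ℕ)
    (g : Fin 2 → Fin (m+1) → ℝ) (hg : ∀ k i, |g k i| ≤ 1) :
    |val1 (uExp p 1) g - val1 (uExp p 2) g| ≤ 2 * p * (1 - p) * (2 * p - 1) := by
  rw [val1_one, val1_two]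
  set A := ⨆ i, (p/2 * g 0 i + (1-p)/2 * g 1 i) with hA
  set A' := ⨆ i, ((1-p)/2 * g 0 i + p/2 * g 1 i) with hA'
  set B1 := ⨆ i, (p^2/2 * g 0 i + (1-p)^2/2 * g 1 i) with hB1
  set B2 := ⨆ i, (p*(1-p) * g 0 i + p*(1-p) * g 1 i) with hB2
  set B3 := ⨆ i, ((1-p)^2/2 * g 0 i + p^2/2 * g 1 i) with hB3
  obtain ⟨i1, hi1⟩ := exists_ciSup_eq (fun i => (p^2/2 * g 0 i + (1-p)^2/2 * g 1 i))
  obtain ⟨i2, hi2⟩ := exists_ciSup_eq (fun i => (p*(1-p) * g 0 i + p*(1-p) * g 1 i))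
  obtain ⟨i3, hi3⟩ := exists_ciSup_eq (fun i => ((1-p)^2/2 * g 0 i + p^2/2 * g 1 i))
  obtain ⟨j1, hj1⟩ := exists_ciSup_eq (fun i => (p/2 * g 0 i + (1-p)/2 * g 1 i))
  obtain ⟨j2, hj2⟩ := exists_ciSup_eq (fun i => ((1-p)/2 * g 0 i + p/2 * g 1 i))
  -- bounds on payoffs
  have hb : ∀ k i, -1 ≤ g k i ∧ g k i ≤ 1 := fun k i => abs_le.mp (hg k i)
  have hpq : 0 < p * (1 - p) := by nlinarith
  have hs : 0 < p^2 + (1-p)^2 := by nlinarith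
  have h2p : 0 < 2*p - 1 := by linarith
  -- upper bound on B-side
  have f1 : p/2 * g 0 i1 + (1-p)/2 * g 1 i1 ≤ A := by
    rw [hA]; exact myLeSup (fun i => p/2 * g 0 i + (1-p)/2 * g 1 i) i1
  have f2 : p/2 * g 0 i2 + (1-p)/2 * g 1 i2 ≤ A := by
    rw [hA]; exact myLeSup (fun i => p/2 * g 0 i + (1-p)/2 * g 1 i) i2
  have f3 : (1-p)/2 * g 0 i2 + p/2 * g 1 i2 ≤ A' := by
    rw [hA']; exact myLeSup (fun i => (1-p)/2 * g 0 i + p/2 * g 1 i) i2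
  have f4 : (1-p)/2 * g 0 i3 + p/2 * g 1 i3 ≤ A' := by
    rw [hA']; exact myLeSup (fun i => (1-p)/2 * g 0 i + p/2 * g 1 i) i3
  have e1 : B1 ≤ (p^2 + (1-p)^2) * A + p*(1-p)*(2*p-1) := by
    rw [hB1, hi1]
    have h1 := mul_le_mul_of_nonneg_left f1 (le_of_lt hs)
    have h2 : 0 ≤ p*(1-p)*(2*p-1) * (2 - (g 0 i1 - g 1 i1)) := by
      have := (hb 0 i1).2; have := (hb 1 i1).1
      have : 0 ≤ 2 - (g 0 i1 - g 1 i1) := by linarith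
      positivity
    linarith [h1, h2]
  have e3 : B3 ≤ (p^2 + (1-p)^2) * A' + p*(1-p)*(2*p-1) := by
    rw [hB3, hi3]
    have h1 := mul_le_mul_of_nonneg_left f4 (le_of_lt hs)
    have h2 : 0 ≤ p*(1-p)*(2*p-1) * (2 - (g 1 i3 - g 0 i3)) := by
      have := (hb 1 i3).2; have := (hb 0 i3).1
      have : 0 ≤ 2 - (g 1 i3 - g 0 i3) := by linarith
      positivity
    linarith [h1, h2]
  have e2 : B2 ≤ 2*(p*(1-p)) * (A + A') := by
    rw [hB2, hi2]
    have h1 := mul_le_mul_of_nonneg_left (add_le_add f2 f3) (le_of_lt (by linarith : (0:ℝ) < 2*(p*(1-p))))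
    linarith [h1]
  -- lower bound on B-side (garbling)
  have g1 : p^2/2 * g 0 j1 + (1-p)^2/2 * g 1 j1 ≤ B1 := by
    rw [hB1]; exact myLeSup (fun i => p^2/2 * g 0 i + (1-p)^2/2 * g 1 i) j1
  have g2 : p*(1-p) * g 0 j1 + p*(1-p) * g 1 j1 ≤ B2 := by
    rw [hB2]; exact myLeSup (fun i => p*(1-p) * g 0 i + p*(1-p) * g 1 i) j1
  have g3 : (1-p)^2/2 * g 0 j2 + p^2/2 * g 1 j2 ≤ B3 := by
    rw [hB3]; exact myLeSup (fun i => (1-p)^2/2 * g 0 i + p^2/2 * g 1 i) j2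
  have g4 : p*(1-p) * g 0 j2 + p*(1-p) * g 1 j2 ≤ B2 := by
    rw [hB2]; exact myLeSup (fun i => p*(1-p) * g 0 i + p*(1-p) * g 1 i) j2
  have low : A + A' ≤ B1 + B2 + B3 := by
    rw [hA, hA', hj1, hj2]
    linarith [g1, g2, g3, g4]
  have hD : 0 ≤ 2*p*(1-p)*(2*p-1) :=
    mul_nonneg (mul_nonneg (by linarith : (0:ℝ) ≤ 2*p) (by linarith)) (le_of_lt h2p)
  rw [abs_le]
  constructor
  · linarith [e1, e2, e3]
  · linarith [low, hD]

def gstar (p : ℝ) : Fin 2 → Fin 3 → ℝ := fun k i =>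
  if i = 0 then (if k = 0 then 1 else -1)
  else if i = 1 then (if k = 0 then -1 else 1)
  else 2*p - 1

lemma gstar_bdd (p : ℝ) (hp : 1/2 < p) (hp1 : p < 1) : ∀ k i, |gstar p k i| ≤ 1 := by
  intro k i
  fin_cases k <;> fin_cases i <;> simp [gstar] <;> rw [abs_le] <;> constructor <;> linarith

lemma val1_one_gstar (p : ℝ) (hp : 1/2 < p) (hp1 : p < 1) :
    val1 (uExp p 1) (gstar p) = 2*p - 1 := by
  rw [val1_one p 2 (gstar p)]
  have h1 : (⨆ i, (p/2 * gstar p 0 i + (1-p)/2 * gstar p 1 i))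
      = p/2 * gstar p 0 0 + (1-p)/2 * gstar p 1 0 := by
    refine ciSup_eq_max _ 0 fun i => ?_
    fin_cases i <;> simp [gstar] <;> nlinarith [mul_pos (mul_pos (show (0:ℝ)<p by linarith) (show (0:ℝ)<1-p by linarith)) (show (0:ℝ)<2*p-1 by linarith)]
  have h2 : (⨆ i, ((1-p)/2 * gstar p 0 i + p/2 * gstar p 1 i))
      = (1-p)/2 * gstar p 0 1 + p/2 * gstar p 1 1 := by
    refine ciSup_eq_max _ 1 fun i => ?_
    fin_cases i <;> simp [gstar] <;> nlinarith [mul_pos (mul_pos (show (0:ℝ)<p by linarith) (show (0:ℝ)<1-p by linarith)) (show (0:ℝ)<2*p-1 by linarith)]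
  rw [h1, h2]; simp [gstar]; ring

lemma val1_two_gstar (p : ℝ) (hp : 1/2 < p) (hp1 : p < 1) :
    val1 (uExp p 2) (gstar p) = (2*p - 1) + 2*p*(1-p)*(2*p-1) := by
  rw [val1_two p 2 (gstar p)]
  have h1 : (⨆ i, (p^2/2 * gstar p 0 i + (1-p)^2/2 * gstar p 1 i))
      = p^2/2 * gstar p 0 0 + (1-p)^2/2 * gstar p 1 0 := by
    refine ciSup_eq_max _ 0 fun i => ?_
    fin_cases i <;> simp [gstar] <;> nlinarith [mul_pos (mul_pos (show (0:ℝ)<p by linarith) (show (0:ℝ)<1-p by linarith)) (show (0:ℝ)<2*p-1 by linarith)]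
  have h2 : (⨆ i, (p*(1-p) * gstar p 0 i + p*(1-p) * gstar p 1 i))
      = p*(1-p) * gstar p 0 2 + p*(1-p) * gstar p 1 2 := by
    refine ciSup_eq_max _ 2 fun i => ?_
    fin_cases i <;> simp [gstar] <;> nlinarith [mul_pos (mul_pos (show (0:ℝ)<p by linarith) (show (0:ℝ)<1-p by linarith)) (show (0:ℝ)<2*p-1 by linarith)]
  have h3 : (⨆ i, ((1-p)^2/2 * gstar p 0 i + p^2/2 * gstar p 1 i))
      = (1-p)^2/2 * gstar p 0 1 + p^2/2 * gstar p 1 1 := by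
    refine ciSup_eq_max _ 1 fun i => ?_
    fin_cases i <;> simp [gstar] <;> nlinarith [mul_pos (mul_pos (show (0:ℝ)<p by linarith) (show (0:ℝ)<1-p by linarith)) (show (0:ℝ)<2*p-1 by linarith)]
  rw [h1, h2, h3]; simp [gstar]; ring


theorem stmt12 (p : ℝ) (hp : 1 / 2 < p) (hp1 : p < 1) :
    valueDist1 (uExp p 1) (uExp p 2) = 2 * p * (1 - p) * (2 * p - 1) := by
  have h2p : (0:ℝ) < 2*p - 1 := by linarith
  have hD : 0 < 2 * p * (1 - p) * (2 * p - 1) :=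
    mul_pos (mul_pos (by linarith) (by linarith)) h2p
  have hub : ∀ x ∈ {x : ℝ | ∃ (m : ℕ) (g : Fin 2 → Fin (m + 1) → ℝ),
      (∀ k i, |g k i| ≤ 1) ∧ x = |val1 (uExp p 1) g - val1 (uExp p 2) g|},
      x ≤ 2 * p * (1 - p) * (2 * p - 1) := by
    rintro x ⟨m, g, hg, rfl⟩
    exact gap_bound p hp hp1 m g hg
  have hmem : 2 * p * (1 - p) * (2 * p - 1) ∈ {x : ℝ | ∃ (m : ℕ)
      (g : Fin 2 → Fin (m + 1) → ℝ),
      (∀ k i, |g k i| ≤ 1) ∧ x = |val1 (uExp p 1) g - val1 (uExp p 2) g|} := by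
    refine ⟨2, gstar p, gstar_bdd p hp hp1, ?_⟩
    rw [val1_one_gstar p hp hp1, val1_two_gstar p hp hp1]
    rw [show (2*p - 1) - ((2*p - 1) + 2*p*(1-p)*(2*p-1)) = -(2*p*(1-p)*(2*p-1)) by ring,
      abs_neg, abs_of_pos hD]
  exact le_antisymm (csSup_le ⟨_, hmem⟩ hub) (le_csSup ⟨_, fun x hx => hub x hx⟩ hmem)
end

section
/- For single-agent information structures u, v ∈ Δ(K × C) (K, C finite), the single-agent value-based distance satisfies d₁(u,v) = max( min over garblings q of ‖q.u - v‖₁ , min over garblings q of ‖q.v - u‖₁ ), where (q.u)(k,c) = Σ_{c'} u(k,c') q(c|c'). -/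
open scoped BigOperators

noncomputable section Stmt13Aux

open Finset

variable {K C : Type*} [Fintype K] [Fintype C]

lemma aux_bdd {I : Type*} [Fintype I] (f : I → ℝ) : BddAbove (Set.range f) :=
  (Set.finite_range f).bddAbove

lemma aux_le_ciSup {I : Type*} [Fintype I] (f : I → ℝ) (i : I) : f i ≤ ⨆ j, f j :=
  le_ciSup (aux_bdd f) i

lemma aux_l1_nonneg {α : Type*} [Fintype α] (u v : α → ℝ) : 0 ≤ l1 u v :=
  Finset.sum_nonneg fun _ _ => abs_nonneg _

lemma aux_l1_comm {α : Type*} [Fintype α] (u v : α → ℝ) : l1 u v = l1 v u := by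
  unfold l1
  exact Finset.sum_congr rfl fun a _ => abs_sub_comm _ _

lemma aux_l1_prod (w v : K × C → ℝ) :
    l1 w v = ∑ c, ∑ k, |w (k, c) - v (k, c)| := by
  unfold l1
  rw [Fintype.sum_prod_type, Finset.sum_comm]

lemma aux_nonempty_of_isDist {α : Type*} [Fintype α] {u : α → ℝ} (hu : IsDist u) :
    Nonempty α := by
  by_contra h
  rw [not_nonempty_iff] at h
  have h2 := hu.2
  rw [Finset.univ_eq_empty, Finset.sum_empty] at h2
  norm_num at h2

/-- One-sided Lipschitz property of `val1` in the information structure. -/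
lemma aux_val1_le {I : Type*} [Fintype I] [Nonempty I] (w v : K × C → ℝ)
    (g : K → I → ℝ) (hg : ∀ k i, |g k i| ≤ 1) : val1 w g ≤ val1 v g + l1 w v := by
  unfold val1
  rw [aux_l1_prod, ← Finset.sum_add_distrib]
  apply Finset.sum_le_sum
  intro c _
  apply ciSup_le
  intro i
  have h1 : ∑ k, w (k, c) * g k i ≤ (∑ k, v (k, c) * g k i) + ∑ k, |w (k, c) - v (k, c)| := by
    rw [← Finset.sum_add_distrib]
    apply Finset.sum_le_sum
    intro k _
    have h2 : (w (k, c) - v (k, c)) * g k i ≤ |w (k, c) - v (k, c)| := by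
      calc (w (k, c) - v (k, c)) * g k i ≤ |(w (k, c) - v (k, c)) * g k i| := le_abs_self _
        _ = |w (k, c) - v (k, c)| * |g k i| := abs_mul _ _
        _ ≤ |w (k, c) - v (k, c)| * 1 :=
            mul_le_mul_of_nonneg_left (hg k i) (abs_nonneg _)
        _ = |w (k, c) - v (k, c)| := mul_one _
    nlinarith [h2]
  exact h1.trans (add_le_add_left (aux_le_ciSup (fun i => ∑ k, v (k, c) * g k i) i) _)

lemma aux_abs_val1_sub_le {I : Type*} [Fintype I] [Nonempty I] (w v : K × C → ℝ)
    (g : K → I → ℝ) (hg : ∀ k i, |g k i| ≤ 1) : |val1 w g - val1 v g| ≤ l1 w v := by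
  rw [abs_sub_le_iff]
  constructor
  · have := aux_val1_le w v g hg
    linarith
  · have := aux_val1_le v w g hg
    rw [aux_l1_comm v w] at this
    linarith

/-- Blackwell easy direction: garbling decreases the value. -/
lemma aux_val1_garble_le {I : Type*} [Fintype I] [Nonempty I] (q : C → C → ℝ)
    (hq : IsKernel q) (u : K × C → ℝ) (g : K → I → ℝ) :
    val1 (garble1 q u) g ≤ val1 u g := by
  unfold val1 garble1
  have key : ∀ c' : C, (⨆ i, ∑ k, (∑ c, u (k, c) * q c c') * g k i)
      ≤ ∑ c, q c c' * ⨆ i, ∑ k, u (k, c) * g k i := by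
    intro c'
    apply ciSup_le
    intro i
    have h1 : ∑ k, (∑ c, u (k, c) * q c c') * g k i
        = ∑ c, q c c' * ∑ k, u (k, c) * g k i := by
      simp_rw [Finset.sum_mul, Finset.mul_sum]
      rw [Finset.sum_comm]
      apply Finset.sum_congr rfl
      intro c _
      apply Finset.sum_congr rfl
      intro k _
      ring
    rw [h1]
    apply Finset.sum_le_sum
    intro c _
    exact mul_le_mul_of_nonneg_left (aux_le_ciSup (fun i => ∑ k, u (k, c) * g k i) i) ((hq c).1 c')
  calc (∑ c', ⨆ i, ∑ k, (∑ c, u (k, c) * q c c') * g k i)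
      ≤ ∑ c', ∑ c, q c c' * ⨆ i, ∑ k, u (k, c) * g k i :=
        Finset.sum_le_sum fun c' _ => key c'
    _ = ∑ c, (∑ c', q c c') * ⨆ i, ∑ k, u (k, c) * g k i := by
        rw [Finset.sum_comm]
        exact Finset.sum_congr rfl fun c _ => (Finset.sum_mul _ _ _).symm
    _ = ∑ c, ⨆ i, ∑ k, u (k, c) * g k i := by
        apply Finset.sum_congr rfl
        intro c _
        rw [(hq c).2, one_mul]

lemma aux_abs_val1_le_one {I : Type*} [Fintype I] [Nonempty I] (u : K × C → ℝ)
    (hu : IsDist u) (g : K → I → ℝ) (hg : ∀ k i, |g k i| ≤ 1) : |val1 u g| ≤ 1 := by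
  have habs : ∀ c, |⨆ i, ∑ k, u (k, c) * g k i| ≤ ∑ k, u (k, c) := by
    intro c
    have hb : ∀ i, |∑ k, u (k, c) * g k i| ≤ ∑ k, u (k, c) := by
      intro i
      calc |∑ k, u (k, c) * g k i| ≤ ∑ k, |u (k, c) * g k i| :=
            Finset.abs_sum_le_sum_abs _ _
        _ ≤ ∑ k, u (k, c) := by
            apply Finset.sum_le_sum
            intro k _
            rw [abs_mul, abs_of_nonneg (hu.1 _)]
            exact mul_le_of_le_one_right (hu.1 _) (hg k i)
    rw [abs_le]
    refine ⟨?_, ciSup_le fun i => (abs_le.1 (hb i)).2⟩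
    have i0 : I := Classical.arbitrary I
    exact le_trans (abs_le.1 (hb i0)).1 (aux_le_ciSup (fun i => ∑ k, u (k, c) * g k i) i0)
  calc |val1 u g| ≤ ∑ c, |⨆ i, ∑ k, u (k, c) * g k i| := Finset.abs_sum_le_sum_abs _ _
    _ ≤ ∑ c, ∑ k, u (k, c) := Finset.sum_le_sum fun c _ => habs c
    _ = 1 := by rw [← hu.2, Fintype.sum_prod_type, Finset.sum_comm]

lemma aux_val1_zero {I : Type*} [Fintype I] [Nonempty I] (u : K × C → ℝ) :
    val1 u (fun (_ : K) (_ : I) => (0 : ℝ)) = 0 := by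
  unfold val1
  simp [ciSup_const]

/-- Existence of an optimal garbling (minimizing the ℓ¹ distance). -/
lemma aux_exists_min_garble [Nonempty C] (u v : K × C → ℝ) :
    ∃ q : C → C → ℝ, IsKernel q ∧
      ∀ r : C → C → ℝ, IsKernel r → l1 (garble1 q u) v ≤ l1 (garble1 r u) v := by
  classical
  have hset : {r : C → C → ℝ | IsKernel r} = Set.univ.pi (fun _ : C => stdSimplex ℝ C) := by
    ext r
    simp [IsKernel, IsDist, stdSimplex, Set.mem_pi]
  have hKS : IsCompact {r : C → C → ℝ | IsKernel r} := by
    rw [hset]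
    exact isCompact_univ_pi fun _ => isCompact_stdSimplex ℝ C
  have hne : {r : C → C → ℝ | IsKernel r}.Nonempty := by
    refine ⟨fun _ c' => if c' = Classical.arbitrary C then 1 else 0, fun c => ⟨?_, ?_⟩⟩
    · intro c'
      by_cases h : c' = Classical.arbitrary C <;> simp [h]
    · simp
  have hcont : Continuous fun r : C → C → ℝ => l1 (garble1 r u) v := by
    unfold l1 garble1
    apply continuous_finset_sum
    intro a _
    apply Continuous.abs
    apply Continuous.sub _ continuous_const
    apply continuous_finset_sum
    intro c _
    exact continuous_const.mul ((continuous_apply a.2).comp (continuous_apply c))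
  obtain ⟨q, hqmem, hqmin⟩ := hKS.exists_isMinOn hne hcont.continuousOn
  exact ⟨q, hqmem, fun r hr => isMinOn_iff.1 hqmin r hr⟩

lemma aux_sum_prod_eq (w φ : K × C → ℝ) :
    ∑ a : K × C, w a * φ a = ∑ c, ∑ k, w (k, c) * φ (k, c) := by
  rw [Fintype.sum_prod_type, Finset.sum_comm]

lemma aux_sum_garble (r : C → C → ℝ) (u : K × C → ℝ) (φ : K × C → ℝ) :
    ∑ a : K × C, garble1 r u a * φ a
      = ∑ c, ∑ k, u (k, c) * (∑ c', r c c' * φ (k, c')) := by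
  unfold garble1
  rw [Fintype.sum_prod_type]
  have h1 : ∀ (k : K) (c' : C), (∑ c, u (k, c) * r c c') * φ (k, c')
      = ∑ c, u (k, c) * (r c c' * φ (k, c')) := by
    intro k c'
    rw [Finset.sum_mul]
    exact Finset.sum_congr rfl fun c _ => by ring
  simp_rw [h1]
  have h2 : ∀ k : K, (∑ c' : C, ∑ c : C, u (k, c) * (r c c' * φ (k, c')))
      = ∑ c : C, ∑ c' : C, u (k, c) * (r c c' * φ (k, c')) := fun k => Finset.sum_comm
  simp_rw [h2]
  rw [Finset.sum_comm]
  apply Finset.sum_congr rfl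
  intro c _
  apply Finset.sum_congr rfl
  intro k _
  rw [Finset.mul_sum]

/-- The separation step: the minimal garbling distance is achieved as a value gap. -/
lemma aux_key_lower (u v : K × C → ℝ) (hu : IsDist u) (hv : IsDist v)
    (q : C → C → ℝ) (hq : IsKernel q)
    (hmin : ∀ r : C → C → ℝ, IsKernel r → l1 (garble1 q u) v ≤ l1 (garble1 r u) v) :
    ∃ (m : ℕ) (g : K → Fin (m + 1) → ℝ), (∀ k i, |g k i| ≤ 1) ∧
      l1 (garble1 q u) v ≤ val1 v g - val1 u g := by
  classical
  have hKC : Nonempty (K × C) := aux_nonempty_of_isDist hu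
  have hC : Nonempty C := ⟨hKC.some.2⟩
  have hK : Nonempty K := ⟨hKC.some.1⟩
  set δ := l1 (garble1 q u) v with hδ
  have hδ0 : 0 ≤ δ := aux_l1_nonneg _ _
  rcases eq_or_lt_of_le hδ0 with hδeq | hδpos
  · refine ⟨0, fun _ _ => 0, by norm_num, ?_⟩
    rw [aux_val1_zero, aux_val1_zero, ← hδeq]
    norm_num
  -- the convex sets
  set S : Set (K × C → ℝ) := (fun r => garble1 r u) '' {r : C → C → ℝ | IsKernel r} with hS
  set B : Set (K × C → ℝ) := {w | l1 w v < δ} with hB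
  have hcont : Continuous fun w : K × C → ℝ => l1 w v := by
    unfold l1
    apply continuous_finset_sum
    intro a _
    exact ((continuous_apply a).sub continuous_const).abs
  have hBopen : IsOpen B := isOpen_Iio.preimage hcont
  have hBconv : Convex ℝ B := by
    intro w1 h1 w2 h2 a b ha hb hab
    simp only [hB, Set.mem_setOf_eq] at h1 h2 ⊢
    set M := max (l1 w1 v) (l1 w2 v) with hM
    have hle : l1 (a • w1 + b • w2) v ≤ a * l1 w1 v + b * l1 w2 v := by
      unfold l1
      simp only [Finset.mul_sum]
      rw [← Finset.sum_add_distrib]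
      apply Finset.sum_le_sum
      intro x _
      have hvx : v x = a * v x + b * v x := by rw [← add_mul, hab, one_mul]
      calc |(a • w1 + b • w2) x - v x| = |a * (w1 x - v x) + b * (w2 x - v x)| := by
            simp only [Pi.add_apply, Pi.smul_apply, smul_eq_mul]
            congr 1
            linear_combination v x * hab
        _ ≤ |a * (w1 x - v x)| + |b * (w2 x - v x)| := abs_add_le _ _
        _ = a * |w1 x - v x| + b * |w2 x - v x| := by
            rw [abs_mul, abs_mul, abs_of_nonneg ha, abs_of_nonneg hb]
    have h1' : a * l1 w1 v ≤ a * M := mul_le_mul_of_nonneg_left (le_max_left _ _) ha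
    have h2' : b * l1 w2 v ≤ b * M := mul_le_mul_of_nonneg_left (le_max_right _ _) hb
    have hMδ : M < δ := max_lt h1 h2
    calc l1 (a • w1 + b • w2) v ≤ a * l1 w1 v + b * l1 w2 v := hle
      _ ≤ a * M + b * M := add_le_add h1' h2'
      _ = M := by rw [← add_mul, hab, one_mul]
      _ < δ := hMδ
  have hSconv : Convex ℝ S := by
    rintro w1 ⟨r1, hr1, rfl⟩ w2 ⟨r2, hr2, rfl⟩ a b ha hb hab
    refine ⟨a • r1 + b • r2, ?_, ?_⟩
    · intro c
      constructor
      · intro c'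
        simp only [Pi.add_apply, Pi.smul_apply, smul_eq_mul]
        have := (hr1 c).1 c'
        have := (hr2 c).1 c'
        positivity
      · simp only [Pi.add_apply, Pi.smul_apply, smul_eq_mul]
        rw [Finset.sum_add_distrib, ← Finset.mul_sum, ← Finset.mul_sum,
          (hr1 c).2, (hr2 c).2, mul_one, mul_one, hab]
    · funext x
      simp only [garble1, Pi.add_apply, Pi.smul_apply, smul_eq_mul]
      rw [Finset.mul_sum, Finset.mul_sum, ← Finset.sum_add_distrib]
      apply Finset.sum_congr rfl
      intro c _
      ring
  have hdisj : Disjoint B S := by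
    rw [Set.disjoint_left]
    rintro w hwB ⟨r, hr, rfl⟩
    exact absurd (hmin r hr) (not_le.2 hwB)
  obtain ⟨f, c₀, hfB, hfS⟩ := geometric_hahn_banach_open hBconv hBopen hSconv hdisj
  -- basis vectors and representation of f
  set e : K × C → (K × C → ℝ) := fun a => fun j => if a = j then (1 : ℝ) else 0 with he
  have hrep : ∀ w : K × C → ℝ, f w = ∑ a, w a * f (e a) := by
    intro w
    conv_lhs => rw [pi_eq_sum_univ w]
    rw [map_sum]
    apply Finset.sum_congr rfl
    intro a _
    rw [map_smul, smul_eq_mul]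
  -- v is in B
  have hvB : v ∈ B := by
    simp only [hB, Set.mem_setOf_eq]
    have : l1 v v = 0 := by
      unfold l1
      simp
    rw [this]
    exact hδpos
  have hfv : f v < c₀ := hfB v hvB
  -- the maximal coordinate
  obtain ⟨a₀, -, ha₀⟩ := Finset.exists_max_image (Finset.univ : Finset (K × C))
    (fun a => |f (e a)|) ⟨hKC.some, Finset.mem_univ _⟩
  set M := |f (e a₀)| with hMdef
  have hMabs : ∀ a, |f (e a)| ≤ M := fun a => ha₀ a (Finset.mem_univ a)
  have hquS : garble1 q u ∈ S := ⟨q, hq, rfl⟩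
  have hMpos : 0 < M := by
    rcases lt_or_eq_of_le (abs_nonneg (f (e a₀))) with h | h
    · exact h
    · exfalso
      have hzero : ∀ w : K × C → ℝ, f w = 0 := by
        intro w
        rw [hrep w]
        apply Finset.sum_eq_zero
        intro a _
        have : |f (e a)| ≤ 0 := by rw [hMdef] at hMabs; rw [← h] at hMabs; exact hMabs a
        have : f (e a) = 0 := abs_eq_zero.1 (le_antisymm this (abs_nonneg _))
        rw [this, mul_zero]
      have h1 : (0 : ℝ) < c₀ := by rw [← hzero v]; exact hfv
      have h2 : c₀ ≤ 0 := by rw [← hzero (garble1 q u)]; exact hfS _ hquS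
      linarith
  -- for every t ∈ [0, δ), f v + t * M < c₀
  have hkey : ∀ t : ℝ, 0 ≤ t → t < δ → f v + t * M < c₀ := by
    intro t ht0 htδ
    set s : ℝ := if 0 ≤ f (e a₀) then 1 else -1 with hs
    have hsM : s * f (e a₀) = M := by
      rw [hMdef, hs]
      by_cases h : 0 ≤ f (e a₀)
      · rw [if_pos h, one_mul, abs_of_nonneg h]
      · rw [if_neg h, abs_of_neg (lt_of_not_ge h)]
        ring
    have hsabs : |s| = 1 := by
      rw [hs]
      by_cases h : 0 ≤ f (e a₀) <;> simp [h]
    set w : K × C → ℝ := v + (t * s) • e a₀ with hw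
    have hwB : w ∈ B := by
      simp only [hB, Set.mem_setOf_eq]
      have hsub : ∀ a : K × C, w a - v a = (t * s) * e a₀ a := by
        intro a
        simp only [hw, Pi.add_apply, Pi.smul_apply, smul_eq_mul]
        ring
      have habs : ∀ a : K × C, |w a - v a| = if a₀ = a then t else 0 := by
        intro a
        rw [hsub a]
        simp only [he]
        by_cases h : a₀ = a
        · rw [if_pos h, if_pos h, mul_one, abs_mul, hsabs, mul_one, abs_of_nonneg ht0]
        · rw [if_neg h, if_neg h, mul_zero, abs_zero]
      have hl1w : l1 w v = t := by
        unfold l1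
        simp_rw [habs]
        rw [Finset.sum_ite_eq (Finset.univ : Finset (K × C)) a₀ (fun _ => t)]
        simp
      rw [hl1w]
      exact htδ
    have := hfB w hwB
    calc f v + t * M = f w := by
          rw [hw, map_add, map_smul, smul_eq_mul, ← hsM]
          ring
      _ < c₀ := this
  -- pass to the limit t → δ
  have hsep : ∀ w ∈ S, f v + δ * M ≤ f w := by
    intro w hw
    by_contra hcon
    push_neg at hcon
    have hc₀w : c₀ ≤ f w := hfS w hw
    have hc₀lt : c₀ < f v + δ * M := lt_of_le_of_lt hc₀w hcon
    set t₀ : ℝ := (c₀ - f v) / M with ht₀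
    have ht₀δ : t₀ < δ := by
      rw [ht₀, div_lt_iff₀ hMpos]
      linarith
    set t : ℝ := max t₀ 0 with ht
    have htδ : t < δ := max_lt ht₀δ hδpos
    have ht0 : 0 ≤ t := le_max_right _ _
    have := hkey t ht0 htδ
    have htt₀ : t₀ ≤ t := le_max_left _ _
    have : f v + t₀ * M ≤ f v + t * M := by
      have := mul_le_mul_of_nonneg_right htt₀ (le_of_lt hMpos)
      linarith
    have ht₀M : t₀ * M = c₀ - f v := div_mul_cancel₀ _ (ne_of_gt hMpos)
    have := hkey t ht0 htδ
    linarith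
  -- construct the decision problem
  set φ : K × C → ℝ := fun a => -(f (e a)) / M with hφ
  have hφabs : ∀ a, |φ a| ≤ 1 := by
    intro a
    rw [hφ]
    rw [abs_div, abs_neg, abs_of_pos hMpos, div_le_one hMpos]
    exact hMabs a
  -- F w = ∑ a, w a * φ a = -(f w)/M
  have hF : ∀ w : K × C → ℝ, ∑ a, w a * φ a = -(f w) / M := by
    intro w
    rw [hrep w, neg_div, Finset.sum_div, ← Finset.sum_neg_distrib]
    apply Finset.sum_congr rfl
    intro a _
    rw [hφ]
    ring
  have hφsep : ∀ w ∈ S, ∑ a, w a * φ a ≤ (∑ a, v a * φ a) - δ := by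
    intro w hw
    rw [hF w, hF v]
    have h0 := hsep w hw
    have h1 : -(f w) / M ≤ (-(f v) - δ * M) / M := by
      rw [div_le_div_iff₀ hMpos hMpos]
      nlinarith
    have h2 : (-(f v) - δ * M) / M = -(f v) / M - δ := by
      rw [sub_div, mul_div_cancel_right₀ _ (ne_of_gt hMpos)]
    linarith
  -- index the actions by C
  obtain ⟨m, hm⟩ : ∃ m, Fintype.card C = m + 1 :=
    Nat.exists_eq_succ_of_ne_zero Fintype.card_ne_zero
  set eC : C ≃ Fin (m + 1) := (Fintype.equivFin C).trans (finCongr hm) with heC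
  refine ⟨m, fun k i => φ (k, eC.symm i), fun k i => hφabs _, ?_⟩
  have hvg : (∑ a, v a * φ a) ≤ val1 v (fun k i => φ (k, eC.symm i)) := by
    rw [aux_sum_prod_eq]
    unfold val1
    apply Finset.sum_le_sum
    intro c _
    have h3 : ∑ k, v (k, c) * φ (k, c)
        = ∑ k, v (k, c) * (fun k i => φ (k, eC.symm i)) k (eC c) := by
      simp
    rw [h3]
    exact aux_le_ciSup (fun i => ∑ k, v (k, c) * (fun k i => φ (k, eC.symm i)) k i) (eC c)
  have hug : val1 u (fun k i => φ (k, eC.symm i)) ≤ (∑ a, v a * φ a) - δ := by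
    have hex : ∀ c : C, ∃ i : Fin (m + 1), ∀ j : Fin (m + 1),
        (∑ k, u (k, c) * φ (k, eC.symm j)) ≤ ∑ k, u (k, c) * φ (k, eC.symm i) := by
      intro c
      obtain ⟨i, -, hi⟩ := Finset.exists_max_image Finset.univ
        (fun i : Fin (m + 1) => ∑ k, u (k, c) * φ (k, eC.symm i)) ⟨0, Finset.mem_univ _⟩
      exact ⟨i, fun j => hi j (Finset.mem_univ j)⟩
    choose ic hic using hex
    set r : C → C → ℝ := fun c c' => if c' = eC.symm (ic c) then 1 else 0 with hr
    have hrK : IsKernel r := by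
      intro c
      constructor
      · intro c'
        by_cases h : c' = eC.symm (ic c) <;> simp [hr, h]
      · simp [hr]
    have hrS : garble1 r u ∈ S := ⟨r, hrK, rfl⟩
    have h1 := hφsep _ hrS
    rw [aux_sum_garble] at h1
    have h2 : ∀ (c : C) (k : K), (∑ c', r c c' * φ (k, c')) = φ (k, eC.symm (ic c)) := by
      intro c k
      rw [hr]
      simp [ite_mul, Finset.sum_ite_eq']
    simp_rw [h2] at h1
    unfold val1
    refine le_trans (Finset.sum_le_sum fun c _ => ?_) h1
    exact ciSup_le fun j => hic c j
  linarith [hvg, hug]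

end Stmt13Aux

theorem stmt13 {K C : Type*} [Fintype K] [Fintype C]
    (u v : K × C → ℝ) (hu : IsDist u) (hv : IsDist v) :
    ∃ (q q' : C → C → ℝ), IsKernel q ∧ IsKernel q' ∧
      (∀ r : C → C → ℝ, IsKernel r → l1 (garble1 q u) v ≤ l1 (garble1 r u) v) ∧
      (∀ r : C → C → ℝ, IsKernel r → l1 (garble1 q' v) u ≤ l1 (garble1 r v) u) ∧
      valueDist1 u v = max (l1 (garble1 q u) v) (l1 (garble1 q' v) u) := by
  classical
  have hKC : Nonempty (K × C) := aux_nonempty_of_isDist hu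
  haveI hC : Nonempty C := ⟨hKC.some.2⟩
  obtain ⟨q, hqK, hqmin⟩ := aux_exists_min_garble u v
  obtain ⟨q', hq'K, hq'min⟩ := aux_exists_min_garble v u
  refine ⟨q, q', hqK, hq'K, hqmin, hq'min, ?_⟩
  have h0mem : (0 : ℝ) ∈ {x : ℝ | ∃ (m : ℕ) (g : K → Fin (m + 1) → ℝ),
      (∀ k i, |g k i| ≤ 1) ∧ x = |val1 u g - val1 v g|} := by
    refine ⟨0, fun _ _ => 0, by norm_num, ?_⟩
    rw [aux_val1_zero, aux_val1_zero]
    norm_num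
  have hbdd : BddAbove {x : ℝ | ∃ (m : ℕ) (g : K → Fin (m + 1) → ℝ),
      (∀ k i, |g k i| ≤ 1) ∧ x = |val1 u g - val1 v g|} := by
    refine ⟨2, ?_⟩
    rintro x ⟨m, g, hg, rfl⟩
    have h1 := aux_abs_val1_le_one u hu g hg
    have h2 := aux_abs_val1_le_one v hv g hg
    calc |val1 u g - val1 v g| ≤ |val1 u g| + |val1 v g| := abs_sub _ _
      _ ≤ 2 := by linarith
  rw [valueDist1]
  apply le_antisymm
  · apply csSup_le ⟨0, h0mem⟩
    rintro x ⟨m, g, hg, rfl⟩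
    rw [abs_sub_le_iff]
    constructor
    · have h1 : val1 u g ≤ val1 (garble1 q' v) g + l1 u (garble1 q' v) :=
        aux_val1_le _ _ g hg
      have h2 : val1 (garble1 q' v) g ≤ val1 v g := aux_val1_garble_le q' hq'K v g
      have h3 : l1 u (garble1 q' v) = l1 (garble1 q' v) u := aux_l1_comm _ _
      have h4 := le_max_right (l1 (garble1 q u) v) (l1 (garble1 q' v) u)
      linarith
    · have h1 : val1 v g ≤ val1 (garble1 q u) g + l1 v (garble1 q u) :=
        aux_val1_le _ _ g hg
      have h2 : val1 (garble1 q u) g ≤ val1 u g := aux_val1_garble_le q hqK u g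
      have h3 : l1 v (garble1 q u) = l1 (garble1 q u) v := aux_l1_comm _ _
      have h4 := le_max_left (l1 (garble1 q u) v) (l1 (garble1 q' v) u)
      linarith
  · apply max_le
    · obtain ⟨m, g, hg, hge⟩ := aux_key_lower u v hu hv q hqK hqmin
      have h1 : l1 (garble1 q u) v ≤ |val1 u g - val1 v g| := by
        have h2 := le_abs_self (val1 v g - val1 u g)
        rw [abs_sub_comm] at h2
        linarith
      exact h1.trans (le_csSup hbdd ⟨m, g, hg, rfl⟩)
    · obtain ⟨m, g, hg, hge⟩ := aux_key_lower v u hv hu q' hq'K hq'min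
      have h1 : l1 (garble1 q' v) u ≤ |val1 u g - val1 v g| :=
        hge.trans (le_abs_self _)
      exact h1.trans (le_csSup hbdd ⟨m, g, hg, rfl⟩)
end
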